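/- arXiv:math/0304134 — 5 statements merged into one kernel-verified Lean document; each statement's English description precedes it below -/
import Mathlib

section
/- Let (W_t)_{t ≥ 0} be a standard one-dimensional Brownian motion. For every H ∈ (0,1) there exists γ > 0 such that, almost surely, sup_{s,t ≥ 0, s ≠ t} Γ(s,t)^γ · |W_s − W_t| / (|s−t|^{(1−H)/2} (1 + s + t)^{1/2}) < ∞, where Γ(s,t) = (1 + s + t)² / |s−t|. Moreover this supremum, as a random variable, has finite moments of all orders. -/
namespace BMaux

open MeasureTheory Set Filter ProbabilityTheory Real
open scoped ENNReal NNReal Topology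

lemma geom_partial_le {q : ℝ} (h0 : 0 ≤ q) (h1 : q < 1) (N : ℕ) :
    ∑ i ∈ Finset.range N, q ^ i ≤ (1 - q)⁻¹ := by
  have hs : Summable fun i : ℕ => q ^ i := summable_geometric_of_lt_one h0 h1
  calc ∑ i ∈ Finset.range N, q ^ i ≤ ∑' i : ℕ, q ^ i :=
        Summable.sum_le_tsum _ (fun i _ => pow_nonneg h0 i) hs
    _ = (1 - q)⁻¹ := tsum_geometric_of_lt_one h0 h1

lemma scale_rpow {T α : ℝ} (hT : 0 < T) (j : ℕ) :
    (T / 2 ^ j) ^ α = T ^ α * ((2 : ℝ) ^ (-α)) ^ j := by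
  rw [Real.div_rpow hT.le (by positivity)]
  rw [← Real.rpow_natCast (2 : ℝ) j, ← Real.rpow_natCast ((2:ℝ) ^ (-α)) j,
    ← Real.rpow_mul (by norm_num), ← Real.rpow_mul (by norm_num),
    div_eq_mul_inv, ← Real.rpow_neg (by norm_num)]
  ring_nf

lemma approx_one_sided {f : ℝ → ℝ} {T α a : ℝ} (hT : 0 < T) (hα : 0 < α) (ha : 0 ≤ a)
    (hf : ContinuousOn f (Icc 0 T))
    (hξ : ∀ j k : ℕ, k < 2 ^ j →
      |f (((k : ℝ) + 1) * (T / 2 ^ j)) - f ((k : ℝ) * (T / 2 ^ j))| ≤ a * (T / 2 ^ j) ^ α)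
    {s : ℝ} (hs : s ∈ Icc 0 T) (m : ℕ) :
    |f s - f ((⌊s * 2 ^ m / T⌋₊ : ℝ) * (T / 2 ^ m))| ≤
      a * T ^ α * ((2 : ℝ) ^ (-α)) ^ m * (1 - (2:ℝ) ^ (-α))⁻¹ := by
  obtain ⟨hs0, hsT⟩ := hs
  set q : ℝ := (2 : ℝ) ^ (-α) with hq
  have hq0 : 0 < q := Real.rpow_pos_of_pos (by norm_num) _
  have hq1 : q < 1 := Real.rpow_lt_one_of_one_lt_of_neg (by norm_num) (by linarith)
  set x : ℕ → ℝ := fun j => s * 2 ^ j / T with hxdef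
  set g : ℕ → ℝ := fun j => (⌊x j⌋₊ : ℝ) * (T / 2 ^ j) with hgdef
  have hx0 : ∀ j, 0 ≤ x j := fun j => by positivity
  have hxle : ∀ j, x j ≤ 2 ^ j := fun j => by
    rw [hxdef]; rw [div_le_iff₀ hT]
    calc s * 2 ^ j ≤ T * 2 ^ j := by nlinarith [pow_pos (show (0:ℝ) < 2 by norm_num) j]
      _ = 2 ^ j * T := by ring
  have hfloor_le : ∀ j, (⌊x j⌋₊ : ℝ) ≤ x j := fun j => Nat.floor_le (hx0 j)
  have hgle : ∀ j, g j ≤ s := by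
    intro j
    have h2j : (0:ℝ) < 2 ^ j := by positivity
    have : (⌊x j⌋₊ : ℝ) * (T / 2 ^ j) ≤ x j * (T / 2 ^ j) := by
      apply mul_le_mul_of_nonneg_right (hfloor_le j) (by positivity)
    calc g j ≤ x j * (T / 2 ^ j) := this
      _ = s := by simp only [hxdef]; field_simp
  have hg0 : ∀ j, 0 ≤ g j := fun j => by positivity
  have hggt : ∀ j, s < g j + T / 2 ^ j := by
    intro j
    have h2j : (0:ℝ) < 2 ^ j := by positivity
    have h1 : x j < (⌊x j⌋₊ : ℝ) + 1 := Nat.lt_floor_add_one _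
    have := mul_lt_mul_of_pos_right h1 (show (0:ℝ) < T / 2 ^ j by positivity)
    calc s = x j * (T / 2 ^ j) := by simp only [hxdef]; field_simp
      _ < ((⌊x j⌋₊ : ℝ) + 1) * (T / 2 ^ j) := this
      _ = g j + T / 2 ^ j := by ring
  have hkle : ∀ j, ⌊x j⌋₊ ≤ 2 ^ j := by
    intro j
    have h1 : x j ≤ ((2 ^ j : ℕ) : ℝ) := by push_cast; exact hxle j
    have := Nat.floor_mono h1
    rwa [Nat.floor_natCast] at this
  -- step bound
  have step : ∀ j, |f (g (j + 1)) - f (g j)| ≤ a * T ^ α * q ^ (j + 1) := by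
    intro j
    have hx2 : x (j + 1) = 2 * x j := by rw [hxdef]; ring
    set k := ⌊x j⌋₊ with hk
    set k' := ⌊x (j+1)⌋₊ with hk'
    have h2k : 2 * k ≤ k' := by
      apply Nat.le_floor
      rw [hx2]; push_cast
      nlinarith [hfloor_le j]
    have hk2 : k' ≤ 2 * k + 1 := by
      have : x (j+1) < (2 * k + 2 : ℕ) := by
        rw [hx2]; push_cast
        nlinarith [Nat.lt_floor_add_one (x j)]
      have := Nat.floor_lt (hx0 (j+1)) |>.mpr this
      omega
    have hscale : a * (T / 2 ^ (j+1)) ^ α = a * T ^ α * q ^ (j+1) := by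
      rw [scale_rpow hT]; ring
    rcases Nat.lt_or_ge k' (2*k+1) with hcase | hcase
    · -- k' = 2k, g(j+1) = g j
      have hkeq : k' = 2 * k := by omega
      have hgeq : g (j+1) = g j := by
        rw [hgdef]; simp only [← hk, ← hk', hkeq]
        push_cast
        field_simp
        ring
      rw [hgeq, sub_self, abs_zero]
      positivity
    · have hkeq : k' = 2 * k + 1 := by omega
      have hklt : 2 * k < 2 ^ (j + 1) := by
        have := hkle (j+1)
        omega
      have hgj : g j = ((2*k : ℕ) : ℝ) * (T / 2 ^ (j+1)) := by
        rw [hgdef]; simp only [← hk]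
        push_cast
        field_simp
        ring
      have hgj1 : g (j+1) = (((2*k : ℕ) : ℝ) + 1) * (T / 2 ^ (j+1)) := by
        rw [hgdef]; simp only [← hk', hkeq]
        push_cast
        ring
      rw [hgj, hgj1]
      exact (hξ (j+1) (2*k) hklt).trans (le_of_eq hscale)
  -- telescoping
  have tele : ∀ d : ℕ, |f (g (m + d)) - f (g m)| ≤
      a * T ^ α * ∑ i ∈ Finset.range d, q ^ (m + i + 1) := by
    intro d
    induction d with
    | zero => simp
    | succ d ih =>
      have h1 := step (m + d)
      calc |f (g (m + (d+1))) - f (g m)|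
          ≤ |f (g (m + d + 1)) - f (g (m + d))| + |f (g (m + d)) - f (g m)| := by
            rw [show m + (d+1) = m + d + 1 by ring]
            exact abs_sub_le _ _ _
        _ ≤ a * T ^ α * q ^ (m + d + 1) + a * T ^ α * ∑ i ∈ Finset.range d, q ^ (m + i + 1) := by
            exact add_le_add h1 ih
        _ = a * T ^ α * ∑ i ∈ Finset.range (d+1), q ^ (m + i + 1) := by
            rw [Finset.sum_range_succ]; ring
  have hsum : ∀ d : ℕ, ∑ i ∈ Finset.range d, q ^ (m + i + 1) ≤ q ^ m * (1 - q)⁻¹ := by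
    intro d
    have : ∑ i ∈ Finset.range d, q ^ (m + i + 1) = q ^ (m+1) * ∑ i ∈ Finset.range d, q ^ i := by
      rw [Finset.mul_sum]
      congr 1; ext i; rw [← pow_add]; ring_nf
    rw [this]
    have h1 : q ^ (m+1) ≤ q ^ m := pow_le_pow_of_le_one hq0.le hq1.le (by omega)
    have h2 := geom_partial_le hq0.le hq1 d
    have h3 : (0:ℝ) ≤ (1-q)⁻¹ := inv_nonneg.mpr (by linarith)
    calc q ^ (m+1) * ∑ i ∈ Finset.range d, q ^ i ≤ q ^ (m+1) * (1-q)⁻¹ := by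
          apply mul_le_mul_of_nonneg_left h2 (pow_nonneg hq0.le _)
      _ ≤ q ^ m * (1-q)⁻¹ := mul_le_mul_of_nonneg_right h1 h3
  have tele' : ∀ d : ℕ, |f (g (m + d)) - f (g m)| ≤ a * T ^ α * q ^ m * (1 - q)⁻¹ := by
    intro d
    calc |f (g (m + d)) - f (g m)| ≤ a * T ^ α * ∑ i ∈ Finset.range d, q ^ (m + i + 1) := tele d
      _ ≤ a * T ^ α * (q ^ m * (1 - q)⁻¹) := by
          apply mul_le_mul_of_nonneg_left (hsum d) (by positivity)

      _ = a * T ^ α * q ^ m * (1 - q)⁻¹ := by ring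
  -- limit
  have hgs : Tendsto g atTop (𝓝 s) := by
    have hb : Tendsto (fun j : ℕ => T * (1/2 : ℝ) ^ j) atTop (𝓝 0) := by
      simpa using (tendsto_pow_atTop_nhds_zero_of_lt_one (by norm_num : (0:ℝ) ≤ 1/2)
        (by norm_num)).const_mul T
    have hnorm : ∀ j, ‖g j - s‖ ≤ T * (1/2 : ℝ) ^ j := by
      intro j
      rw [Real.norm_eq_abs, abs_sub_comm, abs_of_nonneg (by linarith [hgle j])]
      have := hggt j
      have : s - g j ≤ T / 2 ^ j := by linarith
      calc s - g j ≤ T / 2 ^ j := this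
        _ = T * (1/2) ^ j := by rw [div_pow, one_pow]; ring
    have := squeeze_zero_norm hnorm hb
    have h2 : Tendsto (fun j => g j - s + s) atTop (𝓝 (0 + s)) := this.add tendsto_const_nhds
    simpa using h2
  have hmem : ∀ j, g j ∈ Icc (0:ℝ) T := fun j => ⟨hg0 j, (hgle j).trans hsT⟩
  have hfg : Tendsto (fun j => f (g j)) atTop (𝓝 (f s)) := by
    have hcw : ContinuousWithinAt f (Icc 0 T) s := hf s ⟨hs0, hsT⟩
    exact hcw.tendsto.comp (tendsto_nhdsWithin_of_tendsto_nhds_of_eventually_within g hgs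
      (Eventually.of_forall hmem))
  have hlim : Tendsto (fun d : ℕ => |f (g (m + d)) - f (g m)|) atTop
      (𝓝 |f s - f (g m)|) := by
    have h2 : Tendsto (fun d : ℕ => f (g (m + d))) atTop (𝓝 (f s)) := by
      have := hfg.comp (tendsto_add_atTop_nat m)
      simpa [Function.comp_def, Nat.add_comm m] using this
    exact ((h2.sub tendsto_const_nhds).abs)
  have := le_of_tendsto hlim (Eventually.of_forall tele')
  simpa [hgdef, hxdef] using this

lemma chaining {f : ℝ → ℝ} {T α a : ℝ} (hT : 0 < T) (hα : 0 < α) (ha : 0 ≤ a)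
    (hf : ContinuousOn f (Icc 0 T))
    (hξ : ∀ j k : ℕ, k < 2 ^ j →
      |f (((k : ℝ) + 1) * (T / 2 ^ j)) - f ((k : ℝ) * (T / 2 ^ j))| ≤ a * (T / 2 ^ j) ^ α)
    {s t : ℝ} (hs : s ∈ Icc 0 T) (ht : t ∈ Icc 0 T) (hst : s < t) :
    |f t - f s| ≤ 3 * 2 ^ α * (1 - (2:ℝ) ^ (-α))⁻¹ * a * (t - s) ^ α := by
  set q : ℝ := (2 : ℝ) ^ (-α) with hq
  have hq0 : 0 < q := Real.rpow_pos_of_pos (by norm_num) _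
  have hq1 : q < 1 := Real.rpow_lt_one_of_one_lt_of_neg (by norm_num) (by linarith)
  have hts : 0 < t - s := by linarith
  have htsT : t - s ≤ T := by
    rcases hs with ⟨hs0, _⟩; rcases ht with ⟨_, htT⟩; linarith
  -- choose m
  set r : ℝ := T / (t - s) with hr
  have hr1 : 1 ≤ r := (one_le_div hts).mpr htsT
  have hr0 : 0 < r := by linarith
  set m : ℕ := ⌊Real.logb 2 r⌋₊ with hm
  have hlog0 : 0 ≤ Real.logb 2 r := Real.logb_nonneg one_lt_two hr1
  have h2m : (2:ℝ) ^ m ≤ r := by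
    calc (2:ℝ) ^ m = (2:ℝ) ^ (m : ℝ) := (Real.rpow_natCast 2 m).symm
      _ ≤ (2:ℝ) ^ Real.logb 2 r :=
          Real.rpow_le_rpow_of_exponent_le one_le_two (Nat.floor_le hlog0)
      _ = r := Real.rpow_logb two_pos (by norm_num) hr0
  have hm2 : r < (2:ℝ) ^ (m + 1) := by
    calc r = (2:ℝ) ^ Real.logb 2 r := (Real.rpow_logb two_pos (by norm_num) hr0).symm
      _ < (2:ℝ) ^ ((m : ℝ) + 1) :=
          Real.rpow_lt_rpow_of_exponent_lt one_lt_two (Nat.lt_floor_add_one _)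
      _ = (2:ℝ) ^ (m + 1) := by
          rw [show ((m:ℝ) + 1) = ((m + 1 : ℕ) : ℝ) by push_cast; ring, Real.rpow_natCast]
  have h2mpos : (0:ℝ) < 2 ^ m := by positivity
  have hts1 : t - s ≤ T / 2 ^ m := by
    rw [le_div_iff₀ h2mpos]
    calc (t - s) * 2 ^ m ≤ (t - s) * r := by nlinarith
      _ = T := by rw [hr]; field_simp
  have hts2 : T / 2 ^ m < 2 * (t - s) := by
    have h1 : T < (t - s) * (2:ℝ) ^ (m+1) := by
      have := (div_lt_iff₀ hts).mp hm2
      linarith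
    rw [div_lt_iff₀ h2mpos]
    calc T < (t - s) * (2:ℝ) ^ (m+1) := h1
      _ = 2 * (t - s) * 2 ^ m := by ring
  -- grid points at level m
  set ks : ℕ := ⌊s * 2 ^ m / T⌋₊ with hks
  set kt : ℕ := ⌊t * 2 ^ m / T⌋₊ with hkt
  have hxs0 : 0 ≤ s * 2 ^ m / T := by
    have := hs.1; positivity
  have hxt0 : 0 ≤ t * 2 ^ m / T := by
    have h0 : 0 ≤ t := le_trans hs.1 (le_of_lt hst); positivity
  have hxtle : t * 2 ^ m / T ≤ 2 ^ m := by
    rw [div_le_iff₀ hT]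
    nlinarith [ht.2]
  have hkk : kt ≤ ks + 1 := by
    have h1 : s * 2 ^ m / T < (ks : ℝ) + 1 := Nat.lt_floor_add_one _
    have h1' : s * 2 ^ m < ((ks:ℝ) + 1) * T := by rwa [div_lt_iff₀ hT] at h1
    have h2 : (t - s) * 2 ^ m ≤ T := (le_div_iff₀ h2mpos).mp hts1
    have hxx : t * 2 ^ m / T < ((ks + 2 : ℕ) : ℝ) := by
      rw [div_lt_iff₀ hT]
      push_cast
      nlinarith
    have := (Nat.floor_lt hxt0).mpr hxx
    omega
  have hkskt : ks ≤ kt := Nat.floor_mono (by gcongr)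
  -- middle bound
  have hmid : |f ((kt:ℝ) * (T / 2 ^ m)) - f ((ks:ℝ) * (T / 2 ^ m))| ≤ a * (T / 2 ^ m) ^ α := by
    rcases Nat.eq_or_lt_of_le hkskt with heq | hlt
    · rw [heq, sub_self, abs_zero]; positivity
    · have hkeq : kt = ks + 1 := by omega
      have hkslt : ks < 2 ^ m := by
        have h1 : (ks : ℝ) ≤ s * 2 ^ m / T := Nat.floor_le hxs0
        have h2 : s * 2 ^ m / T < t * 2 ^ m / T := by
          apply div_lt_div_of_pos_right _ hT
          · nlinarith
        have h3 : (ks : ℝ) < ((2:ℕ) ^ m : ℕ) := by push_cast; linarith [hxtle]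
        exact_mod_cast h3
      have := hξ m ks hkslt
      rw [hkeq]; push_cast
      exact this
  -- one-sided bounds
  have hos_s := approx_one_sided hT hα ha hf hξ hs m
  have hos_t := approx_one_sided hT hα ha hf hξ ht m
  -- combine
  have hTm : (T / 2 ^ m) ^ α = T ^ α * q ^ m := scale_rpow hT m
  have h01 : 0 < 1 - q := by linarith
  have h01 : 0 < 1 - q := by linarith
  have hinv1 : 1 ≤ (1 - q)⁻¹ := by
    have h := inv_anti₀ h01 (by linarith : 1 - q ≤ 1)
    simpa using h
  have htotal : |f t - f s| ≤ 3 * (a * T ^ α * q ^ m * (1 - q)⁻¹) := by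
    have tri : |f t - f s| ≤ |f t - f ((kt:ℝ) * (T / 2 ^ m))|
        + |f ((kt:ℝ) * (T / 2 ^ m)) - f ((ks:ℝ) * (T / 2 ^ m))|
        + |f ((ks:ℝ) * (T / 2 ^ m)) - f s| := by
      have h1 : |f t - f s| ≤ |f t - f ((kt:ℝ) * (T / 2 ^ m))| +
          |f ((kt:ℝ) * (T / 2 ^ m)) - f s| := abs_sub_le _ _ _
      have h2 : |f ((kt:ℝ) * (T / 2 ^ m)) - f s| ≤
          |f ((kt:ℝ) * (T / 2 ^ m)) - f ((ks:ℝ) * (T / 2 ^ m))| +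
          |f ((ks:ℝ) * (T / 2 ^ m)) - f s| := abs_sub_le _ _ _
      linarith
    have hmid' : |f ((kt:ℝ) * (T / 2 ^ m)) - f ((ks:ℝ) * (T / 2 ^ m))| ≤
        a * T ^ α * q ^ m * (1 - q)⁻¹ := by
      calc |f ((kt:ℝ) * (T / 2 ^ m)) - f ((ks:ℝ) * (T / 2 ^ m))| ≤ a * (T / 2 ^ m) ^ α := hmid
        _ = a * T ^ α * q ^ m := by rw [hTm]; ring
        _ ≤ a * T ^ α * q ^ m * (1 - q)⁻¹ :=
            le_mul_of_one_le_right (by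
              exact mul_nonneg (mul_nonneg ha (Real.rpow_nonneg hT.le α))
                (pow_nonneg hq0.le m)) hinv1
    have habs_t : |f t - f ((kt:ℝ) * (T / 2 ^ m))| ≤ a * T ^ α * q ^ m * (1 - q)⁻¹ := hos_t
    have habs_s : |f ((ks:ℝ) * (T / 2 ^ m)) - f s| ≤ a * T ^ α * q ^ m * (1 - q)⁻¹ := by
      rw [abs_sub_comm]; exact hos_s
    linarith
  have hqm : T ^ α * q ^ m ≤ 2 ^ α * (t - s) ^ α := by
    have h1 : T ^ α * q ^ m = (T / 2 ^ m) ^ α := hTm.symm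
    rw [h1, ← Real.mul_rpow (by norm_num) hts.le]
    apply Real.rpow_le_rpow (by positivity) (le_of_lt hts2) hα.le
  have hfin : 3 * (a * T ^ α * q ^ m * (1 - q)⁻¹) ≤ 3 * 2 ^ α * (1 - q)⁻¹ * a * (t - s) ^ α := by
    have h0 : (0:ℝ) ≤ (1 - q)⁻¹ := inv_nonneg.mpr h01.le
    calc 3 * (a * T ^ α * q ^ m * (1 - q)⁻¹)
        = 3 * (1 - q)⁻¹ * a * (T ^ α * q ^ m) := by ring
      _ ≤ 3 * (1 - q)⁻¹ * a * (2 ^ α * (t - s) ^ α) :=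
          mul_le_mul_of_nonneg_left hqm
            (mul_nonneg (mul_nonneg (by norm_num) h0) ha)
      _ = 3 * 2 ^ α * (1 - q)⁻¹ * a * (t - s) ^ α := by ring
  linarith


lemma pow_le_factorial_mul_exp {y : ℝ} (hy : 0 ≤ y) (p : ℕ) :
    y ^ p ≤ p.factorial * Real.exp y := by
  have h1 : y ^ p / p.factorial ≤ ∑ i ∈ Finset.range (p + 1), y ^ i / i.factorial :=
    Finset.single_le_sum (f := fun i => y ^ i / (i.factorial : ℝ))
      (fun i _ => by positivity) (Finset.self_mem_range_succ p)
  have h2 := Real.sum_le_exp_of_nonneg hy (p + 1)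
  have h3 : y ^ p / p.factorial ≤ Real.exp y := le_trans h1 h2
  have hp : (0:ℝ) < p.factorial := by exact_mod_cast p.factorial_pos
  calc y ^ p = (y ^ p / p.factorial) * p.factorial := by field_simp
    _ ≤ Real.exp y * p.factorial := mul_le_mul_of_nonneg_right h3 hp.le
    _ = p.factorial * Real.exp y := by ring

lemma integrable_abs_pow_gaussianPDF (p : ℕ) :
    Integrable (fun x : ℝ => gaussianPDFReal 0 1 x * |x| ^ (2 * p)) := by
  have hmeas : Measurable fun x : ℝ => gaussianPDFReal 0 1 x * |x| ^ (2 * p) :=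
    (measurable_gaussianPDFReal 0 1).mul ((measurable_id.abs).pow_const _)
  set C : ℝ := (√(2 * π))⁻¹ * ((4:ℝ) ^ p * p.factorial) with hC
  have hint : Integrable (fun x : ℝ => C * Real.exp (-(1/4 : ℝ) * x ^ 2)) :=
    (integrable_exp_neg_mul_sq (by norm_num : (0:ℝ) < 1/4)).const_mul C
  apply Integrable.mono' hint hmeas.aestronglyMeasurable
  filter_upwards with x
  have hpdf : gaussianPDFReal 0 1 x = (√(2 * π))⁻¹ * Real.exp (-x ^ 2 / 2) := by
    simp [gaussianPDFReal]
  have habs : |x| ^ (2 * p) = (x ^ 2) ^ p := by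
    rw [pow_mul, sq_abs]
  have hkey : (x ^ 2) ^ p ≤ (4:ℝ) ^ p * p.factorial * Real.exp (x ^ 2 / 4) := by
    have h1 : (x ^ 2 / 4) ^ p ≤ p.factorial * Real.exp (x ^ 2 / 4) :=
      pow_le_factorial_mul_exp (by positivity) p
    have h2 : (x ^ 2) ^ p = (4:ℝ) ^ p * (x ^ 2 / 4) ^ p := by
      rw [← mul_pow]; ring_nf
    rw [h2]
    calc (4:ℝ) ^ p * (x ^ 2 / 4) ^ p ≤ (4:ℝ) ^ p * (p.factorial * Real.exp (x ^ 2 / 4)) :=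
          mul_le_mul_of_nonneg_left h1 (by positivity)
      _ = (4:ℝ) ^ p * p.factorial * Real.exp (x ^ 2 / 4) := by ring
  have hnn : 0 ≤ gaussianPDFReal 0 1 x * |x| ^ (2 * p) :=
    mul_nonneg (gaussianPDFReal_nonneg 0 1 x) (by positivity)
  rw [Real.norm_eq_abs, abs_of_nonneg hnn, hpdf, habs]
  have hsqrt : (0:ℝ) < √(2 * π) := Real.sqrt_pos.mpr (by positivity)
  calc (√(2 * π))⁻¹ * Real.exp (-x ^ 2 / 2) * (x ^ 2) ^ p
      ≤ (√(2 * π))⁻¹ * Real.exp (-x ^ 2 / 2) * ((4:ℝ) ^ p * p.factorial * Real.exp (x ^ 2 / 4)) := by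
        apply mul_le_mul_of_nonneg_left hkey (by positivity)
    _ = C * (Real.exp (-x ^ 2 / 2) * Real.exp (x ^ 2 / 4)) := by rw [hC]; ring
    _ = C * Real.exp (-(1/4 : ℝ) * x ^ 2) := by
        rw [← Real.exp_add]; ring_nf

lemma gaussian_moment_one_lt_top (p : ℕ) :
    (∫⁻ x, (ENNReal.ofReal |x|) ^ (2 * p) ∂(gaussianReal 0 1)) < ⊤ := by
  rw [gaussianReal_of_var_ne_zero 0 one_ne_zero]
  rw [lintegral_withDensity_eq_lintegral_mul _ (measurable_gaussianPDF 0 1)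
    (measurable_abs.ennreal_ofReal.pow_const _)]
  have heq : ∀ x : ℝ, (gaussianPDF 0 1 * fun x => (ENNReal.ofReal |x|) ^ (2 * p)) x
      = ENNReal.ofReal (gaussianPDFReal 0 1 x * |x| ^ (2 * p)) := by
    intro x
    simp only [Pi.mul_apply, gaussianPDF]
    rw [ENNReal.ofReal_mul (gaussianPDFReal_nonneg 0 1 x), ENNReal.ofReal_pow (abs_nonneg x)]
  simp_rw [heq]
  exact (integrable_abs_pow_gaussianPDF p).lintegral_lt_top

lemma gaussian_moment_scale (p : ℕ) (v : ℝ≥0) :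
    ∫⁻ x, (ENNReal.ofReal |x|) ^ (2 * p) ∂(gaussianReal 0 v)
      = ENNReal.ofReal ((v:ℝ) ^ p) *
        ∫⁻ x, (ENNReal.ofReal |x|) ^ (2 * p) ∂(gaussianReal 0 1) := by
  by_cases hv : v = 0
  · subst hv
    rw [gaussianReal_zero_var]
    rw [lintegral_dirac' _ (measurable_abs.ennreal_ofReal.pow_const _)]
    rcases Nat.eq_zero_or_pos p with hp | hp
    · subst hp
      simp
    · have h2p : 2 * p ≠ 0 := by omega
      simp [zero_pow h2p, zero_pow hp.ne', ENNReal.ofReal_zero]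
  · have hmap := gaussianReal_map_const_mul (μ := 0) (v := 1) (√(v:ℝ))
    have h2 : (NNReal.mk ((√(v:ℝ))^2) (sq_nonneg _) * 1 : ℝ≥0) = v := by
      ext
      simp [Real.sq_sqrt v.2]
    rw [mul_zero, h2] at hmap
    rw [← hmap, lintegral_map (measurable_abs.ennreal_ofReal.pow_const _)
      (measurable_const_mul _)]
    have hsv : 0 ≤ √(v:ℝ) := Real.sqrt_nonneg _
    have heq : ∀ x : ℝ, (ENNReal.ofReal |√(v:ℝ) * x|) ^ (2 * p)
        = ENNReal.ofReal ((v:ℝ) ^ p) * (ENNReal.ofReal |x|) ^ (2 * p) := by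
      intro x
      rw [abs_mul, abs_of_nonneg hsv, ENNReal.ofReal_mul hsv, mul_pow]
      congr 1
      rw [← ENNReal.ofReal_pow hsv]
      congr 1
      rw [pow_mul]
      congr 1
      exact Real.sq_sqrt v.2
    simp_rw [heq]
    rw [lintegral_const_mul _ (measurable_abs.ennreal_ofReal.pow_const _)]

lemma expr_eq {X D A γ H : ℝ} (hX : 0 < X) (hD : 0 < D) :
    (X ^ 2 / D) ^ γ * A / (D ^ ((1 - H)/2) * X ^ ((1:ℝ)/2))
      = A * X ^ (2*γ - 1/2) / D ^ (γ + (1 - H)/2) := by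
  have h1 : (X ^ 2 / D) ^ γ = X ^ (2*γ) / D ^ γ := by
    rw [Real.div_rpow (by positivity) hD.le]
    congr 1
    rw [← Real.rpow_natCast X 2, ← Real.rpow_mul hX.le]
    norm_num
  have h2 : X ^ (2*γ - 1/2) = X ^ (2*γ) / X ^ ((1:ℝ)/2) := Real.rpow_sub hX _ _
  have h3 : D ^ (γ + (1 - H)/2) = D ^ γ * D ^ ((1-H)/2) := Real.rpow_add hD _ _
  rw [h1, h2, h3]
  have p1 : (0:ℝ) < D ^ γ := Real.rpow_pos_of_pos hD _
  have p2 : (0:ℝ) < D ^ ((1-H)/2) := Real.rpow_pos_of_pos hD _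
  have p3 : (0:ℝ) < X ^ ((1:ℝ)/2) := Real.rpow_pos_of_pos hX _
  field_simp

lemma master_bound {u : ℝ → ℝ} (hu : ContinuousOn u (Ici 0))
    {γ H α β : ℝ} (hαd : α = γ + (1 - H)/2) (hβd : β = 1/2 - 2*γ)
    (hα : 0 < α) (hβ : 0 ≤ β)
    (B : ℝ≥0∞)
    (hB : ∀ n j k : ℕ, k < 2 ^ j →
      ENNReal.ofReal ((2:ℝ) ^ (-(n:ℝ) * β) * ((2:ℝ) ^ (n+1) / 2 ^ j) ^ (-α) *
        |u (((k:ℝ) + 1) * ((2:ℝ) ^ (n+1) / 2 ^ j)) - u ((k:ℝ) * ((2:ℝ) ^ (n+1) / 2 ^ j))|) ≤ B)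
    {s t : ℝ} (hs : 0 ≤ s) (ht : 0 ≤ t) (hst : s < t) :
    ENNReal.ofReal (((1 + s + t) ^ 2 / |s - t|) ^ γ * |u s - u t| /
        (|s - t| ^ ((1 - H)/2) * (1 + s + t) ^ ((1:ℝ)/2)))
      ≤ ENNReal.ofReal (3 * 2 ^ α * (1 - (2:ℝ) ^ (-α))⁻¹) * B := by
  have hq1 : (2:ℝ) ^ (-α) < 1 := Real.rpow_lt_one_of_one_lt_of_neg (by norm_num) (by linarith)
  have hq0 : (0:ℝ) < (2:ℝ) ^ (-α) := Real.rpow_pos_of_pos (by norm_num) _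
  have hK : (0:ℝ) < 3 * 2 ^ α * (1 - (2:ℝ) ^ (-α))⁻¹ := by
    have : (0:ℝ) < 2 ^ α := Real.rpow_pos_of_pos (by norm_num) _
    have h1 : (0:ℝ) < 1 - (2:ℝ) ^ (-α) := by linarith
    positivity
  set K : ℝ := 3 * 2 ^ α * (1 - (2:ℝ) ^ (-α))⁻¹ with hKdef
  by_cases hBtop : B = ⊤
  · rw [hBtop, ENNReal.mul_top (by simp [ENNReal.ofReal_eq_zero]; linarith)]
    exact le_top
  -- setup
  set b : ℝ := B.toReal with hbdef
  have hb0 : 0 ≤ b := ENNReal.toReal_nonneg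
  set X : ℝ := 1 + s + t with hXdef
  have hX1 : 1 ≤ X := by rw [hXdef]; linarith
  have hX0 : 0 < X := by linarith
  set n : ℕ := ⌊Real.logb 2 X⌋₊ with hn
  have hlog0 : 0 ≤ Real.logb 2 X := Real.logb_nonneg one_lt_two hX1
  have h2n : (2:ℝ) ^ n ≤ X := by
    calc (2:ℝ) ^ n = (2:ℝ) ^ (n:ℝ) := (Real.rpow_natCast 2 n).symm
      _ ≤ (2:ℝ) ^ Real.logb 2 X :=
          Real.rpow_le_rpow_of_exponent_le one_le_two (Nat.floor_le hlog0)
      _ = X := Real.rpow_logb two_pos (by norm_num) hX0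
  have hn2 : X < (2:ℝ) ^ (n + 1) := by
    calc X = (2:ℝ) ^ Real.logb 2 X := (Real.rpow_logb two_pos (by norm_num) hX0).symm
      _ < (2:ℝ) ^ ((n:ℝ) + 1) :=
          Real.rpow_lt_rpow_of_exponent_lt one_lt_two (Nat.lt_floor_add_one _)
      _ = (2:ℝ) ^ (n + 1) := by
          rw [show ((n:ℝ) + 1) = ((n + 1 : ℕ) : ℝ) by push_cast; ring, Real.rpow_natCast]
  set T : ℝ := (2:ℝ) ^ (n + 1) with hT
  have hTpos : 0 < T := by positivity
  have hsmem : s ∈ Icc 0 T := ⟨hs, by rw [hT]; linarith⟩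
  have htmem : t ∈ Icc 0 T := ⟨ht, by rw [hT]; linarith⟩
  set a : ℝ := b * (2:ℝ) ^ ((n:ℝ) * β) with hadef
  have ha0 : 0 ≤ a := mul_nonneg hb0 (Real.rpow_pos_of_pos (by norm_num) _).le
  -- increments bound
  have hξ : ∀ j k : ℕ, k < 2 ^ j →
      |u (((k:ℝ) + 1) * (T / 2 ^ j)) - u ((k:ℝ) * (T / 2 ^ j))| ≤ a * (T / 2 ^ j) ^ α := by
    intro j k hk
    have h1 := hB n j k hk
    set w : ℝ := (2:ℝ) ^ (-(n:ℝ) * β) * (T / 2 ^ j) ^ (-α) with hwdef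
    have hw0 : 0 < w := by
      apply mul_pos (Real.rpow_pos_of_pos (by norm_num) _)
        (Real.rpow_pos_of_pos (by positivity) _)
    set Δ : ℝ := |u (((k:ℝ) + 1) * (T / 2 ^ j)) - u ((k:ℝ) * (T / 2 ^ j))| with hΔ
    have hΔ0 : 0 ≤ Δ := abs_nonneg _
    have h2 : w * Δ ≤ b := by
      have h3 := ENNReal.toReal_mono hBtop h1
      rwa [ENNReal.toReal_ofReal (by positivity)] at h3
    have hwin : w⁻¹ = (2:ℝ) ^ ((n:ℝ) * β) * (T / 2 ^ j) ^ α := by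
      rw [hwdef, mul_inv]
      congr 1
      · rw [← Real.rpow_neg (by norm_num)]
        congr 1; ring
      · rw [← Real.rpow_neg (by positivity)]
        congr 1; ring
    calc Δ = w⁻¹ * (w * Δ) := by field_simp
      _ ≤ w⁻¹ * b := by
          apply mul_le_mul_of_nonneg_left h2 (by positivity)
      _ = a * (T / 2 ^ j) ^ α := by rw [hwin, hadef]; ring
  have hcont : ContinuousOn u (Icc 0 T) := hu.mono (fun x hx => hx.1)
  have hch := chaining hTpos hα ha0 hcont hξ hsmem htmem hst
  -- expression bound
  have hD : 0 < |s - t| := by rw [abs_sub_comm, abs_of_pos (by linarith)]; linarith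
  have hDeq : |s - t| = t - s := by rw [abs_sub_comm, abs_of_pos (by linarith)]
  have hexpr := expr_eq (X := X) (D := |s - t|) (A := |u s - u t|) (γ := γ) (H := H) hX0 hD
  have hfinal : (X ^ 2 / |s - t|) ^ γ * |u s - u t| /
      (|s - t| ^ ((1 - H)/2) * X ^ ((1:ℝ)/2)) ≤ K * b := by
    rw [hexpr]
    have hDα : (0:ℝ) < |s - t| ^ (γ + (1-H)/2) := Real.rpow_pos_of_pos hD _
    rw [div_le_iff₀ hDα]
    have habs : |u s - u t| ≤ K * a * |s - t| ^ (γ + (1-H)/2) := by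
      rw [abs_sub_comm, hDeq, ← hαd]
      exact hch
    have hXneg : X ^ (2*γ - 1/2) = (X ^ β)⁻¹ := by
      rw [show 2*γ - 1/2 = -β by rw [hβd]; ring, Real.rpow_neg hX0.le]
    have hXβ0 : (0:ℝ) < X ^ β := Real.rpow_pos_of_pos hX0 _
    have h2nβ : (2:ℝ) ^ ((n:ℝ) * β) ≤ X ^ β := by
      calc (2:ℝ) ^ ((n:ℝ) * β) = ((2:ℝ) ^ n) ^ β := by
            rw [← Real.rpow_natCast 2 n, ← Real.rpow_mul (by norm_num)]
        _ ≤ X ^ β := Real.rpow_le_rpow (by positivity) h2n hβ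
    have hXb : X ^ (2*γ - 1/2) * (2:ℝ) ^ ((n:ℝ) * β) ≤ 1 := by
      rw [hXneg]
      rw [inv_mul_le_iff₀ hXβ0]
      linarith
    calc |u s - u t| * X ^ (2*γ - 1/2)
        ≤ K * a * |s - t| ^ (γ + (1-H)/2) * X ^ (2*γ - 1/2) := by
          apply mul_le_mul_of_nonneg_right habs (Real.rpow_pos_of_pos hX0 _).le
      _ = (K * b) * (X ^ (2*γ - 1/2) * (2:ℝ) ^ ((n:ℝ) * β)) * |s - t| ^ (γ + (1-H)/2) := by
          rw [hadef]; ring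
      _ ≤ (K * b) * 1 * |s - t| ^ (γ + (1-H)/2) := by
          apply mul_le_mul_of_nonneg_right _ hDα.le
          exact mul_le_mul_of_nonneg_left hXb (by positivity)
      _ = K * b * |s - t| ^ (γ + (1-H)/2) := by ring
  calc ENNReal.ofReal ((X ^ 2 / |s - t|) ^ γ * |u s - u t| /
        (|s - t| ^ ((1 - H)/2) * X ^ ((1:ℝ)/2)))
      ≤ ENNReal.ofReal (K * b) := ENNReal.ofReal_le_ofReal hfinal
    _ = ENNReal.ofReal K * ENNReal.ofReal b := ENNReal.ofReal_mul hK.le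
    _ = ENNReal.ofReal K * B := by rw [hbdef, ENNReal.ofReal_toReal hBtop]

lemma moment_bound {Ω : Type*} [MeasurableSpace Ω] (P : Measure Ω) [IsProbabilityMeasure P]
    (W : ℝ → Ω → ℝ) (hWmeas : ∀ t : ℝ, Measurable (W t))
    (hWgauss : ∀ s t : ℝ, 0 ≤ s → 0 ≤ t →
      P.map (fun ω => W t ω - W s ω) = gaussianReal 0 (Real.toNNReal |t - s|))
    {α β : ℝ} (hβ : 0 ≤ β)
    (p : ℕ) (hp2 : 1 < (p:ℝ) * (1 - 2*α)) (h12 : 1 - 2*α - 2*β < 0) :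
    ∫⁻ ω, (⨆ n : ℕ, ⨆ j : ℕ, ⨆ k : Fin (2 ^ j),
      ENNReal.ofReal ((2:ℝ) ^ (-(n:ℝ) * β) * ((2:ℝ) ^ (n+1) / 2 ^ j) ^ (-α) *
        |W (((k:ℝ) + 1) * ((2:ℝ) ^ (n+1) / 2 ^ j)) ω -
         W ((k:ℝ) * ((2:ℝ) ^ (n+1) / 2 ^ j)) ω|)) ^ (2 * p) ∂P < ⊤ := by
  have hb2 : (0:ℝ) ≤ 2 := by norm_num
  set dd : ℕ → ℕ → ℝ := fun n j => (2:ℝ) ^ (n+1) / 2 ^ j with hdddef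
  set w : ℕ → ℕ → ℝ := fun n j => (2:ℝ) ^ (-(n:ℝ) * β) * (dd n j) ^ (-α) with hwdef
  set F : ℕ → ℕ → ℕ → Ω → ℝ≥0∞ := fun n j k ω =>
    ENNReal.ofReal (w n j * |W (((k:ℝ) + 1) * dd n j) ω - W ((k:ℝ) * dd n j) ω|) with hFdef
  set M : ℝ≥0∞ := ∫⁻ x, (ENNReal.ofReal |x|) ^ (2 * p) ∂(gaussianReal 0 1) with hM
  have hMlt : M < ⊤ := gaussian_moment_one_lt_top p
  have hp0 : p ≠ 0 := by
    rintro rfl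
    norm_num at hp2
  have hq0 : (2 * p : ℕ) ≠ 0 := by omega
  have hdd0 : ∀ n j, 0 < dd n j := fun n j => by rw [hdddef]; positivity
  have hw0 : ∀ n j, 0 < w n j := fun n j => by
    rw [hwdef]
    exact mul_pos (Real.rpow_pos_of_pos two_pos _) (Real.rpow_pos_of_pos (hdd0 n j) _)
  have hFmeas : ∀ n j k, Measurable (F n j k) := fun n j k =>
    (((hWmeas _).sub (hWmeas _)).abs.const_mul _).ennreal_ofReal
  -- pointwise bound of sup^2p by tsum
  have hBS : ∀ ω, (⨆ n : ℕ, ⨆ j : ℕ, ⨆ k : Fin (2 ^ j), F n j (k:ℕ) ω) ^ (2 * p)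
      ≤ ∑' n : ℕ, ∑' j : ℕ, ∑' k : Fin (2 ^ j), (F n j (k:ℕ) ω) ^ (2 * p) := by
    intro ω
    set S : ℝ≥0∞ := ∑' n : ℕ, ∑' j : ℕ, ∑' k : Fin (2 ^ j), (F n j (k:ℕ) ω) ^ (2 * p) with hS
    have hle : (⨆ n : ℕ, ⨆ j : ℕ, ⨆ k : Fin (2 ^ j), F n j (k:ℕ) ω)
        ≤ S ^ (((2 * p : ℕ) : ℝ))⁻¹ := by
      apply iSup_le; intro n; apply iSup_le; intro j; apply iSup_le; intro k
      have h1 : (F n j (k:ℕ) ω) ^ (2 * p) ≤ S := by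
        calc (F n j (k:ℕ) ω) ^ (2 * p)
            ≤ ∑' k' : Fin (2 ^ j), (F n j (k':ℕ) ω) ^ (2 * p) := ENNReal.le_tsum k
          _ ≤ ∑' j' : ℕ, ∑' k' : Fin (2 ^ j'), (F n j' (k':ℕ) ω) ^ (2 * p) := ENNReal.le_tsum j
          _ ≤ S := ENNReal.le_tsum n
      have h2 : F n j (k:ℕ) ω = ((F n j (k:ℕ) ω) ^ (2 * p)) ^ (((2 * p : ℕ) : ℝ))⁻¹ := by
        rw [← ENNReal.rpow_natCast (F n j (k:ℕ) ω) (2 * p), ← ENNReal.rpow_mul,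
          mul_inv_cancel₀ (by exact_mod_cast hq0), ENNReal.rpow_one]
      rw [h2]
      exact ENNReal.rpow_le_rpow h1 (by positivity)
    calc (⨆ n : ℕ, ⨆ j : ℕ, ⨆ k : Fin (2 ^ j), F n j (k:ℕ) ω) ^ (2 * p)
        ≤ (S ^ (((2 * p : ℕ) : ℝ))⁻¹) ^ (2 * p) := pow_le_pow_left' hle _
      _ = S := by
          rw [← ENNReal.rpow_natCast (S ^ _) (2 * p), ← ENNReal.rpow_mul,
            inv_mul_cancel₀ (by exact_mod_cast hq0), ENNReal.rpow_one]
  -- single increment moment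
  have hsingle : ∀ n j k : ℕ, ∫⁻ ω, (F n j k ω) ^ (2 * p) ∂P
      = ENNReal.ofReal ((w n j) ^ (2 * p) * (dd n j) ^ p) * M := by
    intro n j k
    have hd := hdd0 n j
    have hwnn := (hw0 n j).le
    have hs' : 0 ≤ (k:ℝ) * dd n j := by positivity
    have ht' : 0 ≤ ((k:ℝ) + 1) * dd n j := by positivity
    have hsplit : ∀ ω, (F n j k ω) ^ (2 * p) = ENNReal.ofReal ((w n j) ^ (2 * p)) *
        (ENNReal.ofReal |W (((k:ℝ) + 1) * dd n j) ω - W ((k:ℝ) * dd n j) ω|) ^ (2 * p) := by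
      intro ω
      rw [hFdef]
      simp only
      rw [ENNReal.ofReal_mul hwnn, mul_pow, ENNReal.ofReal_pow hwnn]
    simp_rw [hsplit]
    rw [lintegral_const_mul (f := fun ω => (ENNReal.ofReal |W (((k:ℝ) + 1) * dd n j) ω - W ((k:ℝ) * dd n j) ω|) ^ (2 * p))
      _ ((((hWmeas _).sub (hWmeas _)).abs.ennreal_ofReal).pow_const _)]
    have hmap : ∫⁻ ω, (ENNReal.ofReal |W (((k:ℝ) + 1) * dd n j) ω - W ((k:ℝ) * dd n j) ω|) ^ (2*p) ∂P
        = ∫⁻ x, (ENNReal.ofReal |x|) ^ (2 * p)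
            ∂(P.map (fun ω => W (((k:ℝ) + 1) * dd n j) ω - W ((k:ℝ) * dd n j) ω)) :=
      (lintegral_map (measurable_abs.ennreal_ofReal.pow_const _)
        ((hWmeas _).sub (hWmeas _))).symm
    rw [hmap, hWgauss _ _ hs' ht', gaussian_moment_scale p]
    have habs : |((k:ℝ) + 1) * dd n j - (k:ℝ) * dd n j| = dd n j := by
      rw [show ((k:ℝ) + 1) * dd n j - (k:ℝ) * dd n j = dd n j by ring, abs_of_pos hd]
    rw [habs, Real.coe_toNNReal _ hd.le, ← hM, ← mul_assoc,
      ← ENNReal.ofReal_mul (by positivity)]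
  -- the geometric structure
  set E0 : ℝ := (p:ℝ) * (1 - 2*α) with hE0
  set e1 : ℝ := (p:ℝ) * (1 - 2*α - 2*β) with he1
  set e2 : ℝ := 1 - (p:ℝ) * (1 - 2*α) with he2
  have hppos : (0:ℝ) < p := by
    have : (0:ℕ) < p := Nat.pos_of_ne_zero hp0
    exact_mod_cast this
  have he1neg : e1 < 0 := by
    rw [he1]
    apply mul_neg_of_pos_of_neg hppos h12
  have he2neg : e2 < 0 := by rw [he2]; linarith
  have hclaim : ∀ n j : ℕ, (2:ℝ) ^ j * ((w n j) ^ (2 * p) * (dd n j) ^ p)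
      = (2:ℝ) ^ E0 * ((2:ℝ) ^ e1) ^ n * ((2:ℝ) ^ e2) ^ j := by
    intro n j
    have hddr : dd n j = (2:ℝ) ^ (((n:ℝ) + 1) - (j:ℝ)) := by
      rw [hdddef]
      simp only
      rw [← Real.rpow_natCast 2 (n+1), ← Real.rpow_natCast 2 j, ← Real.rpow_sub two_pos]
      push_cast
      ring_nf
    have e_w : w n j = (2:ℝ) ^ (-(n:ℝ) * β + (((n:ℝ) + 1) - (j:ℝ)) * (-α)) := by
      rw [hwdef]
      simp only
      rw [hddr, ← Real.rpow_mul hb2, ← Real.rpow_add two_pos]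
    have e_wp : (w n j) ^ (2 * p)
        = (2:ℝ) ^ ((-(n:ℝ) * β + (((n:ℝ) + 1) - (j:ℝ)) * (-α)) * ((2 * p : ℕ) : ℝ)) := by
      rw [e_w, ← Real.rpow_natCast ((2:ℝ) ^ _) (2 * p), ← Real.rpow_mul hb2]
    have e_ddp : (dd n j) ^ p = (2:ℝ) ^ (((((n:ℝ) + 1) - (j:ℝ))) * ((p:ℕ) : ℝ)) := by
      rw [hddr, ← Real.rpow_natCast ((2:ℝ) ^ _) p, ← Real.rpow_mul hb2]
    have e_2j : (2:ℝ) ^ j = (2:ℝ) ^ ((j:ℕ) : ℝ) := (Real.rpow_natCast 2 j).symm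
    have e_rhs1 : ((2:ℝ) ^ e1) ^ n = (2:ℝ) ^ (e1 * ((n:ℕ) : ℝ)) := by
      rw [← Real.rpow_natCast ((2:ℝ) ^ e1) n, ← Real.rpow_mul hb2]
    have e_rhs2 : ((2:ℝ) ^ e2) ^ j = (2:ℝ) ^ (e2 * ((j:ℕ) : ℝ)) := by
      rw [← Real.rpow_natCast ((2:ℝ) ^ e2) j, ← Real.rpow_mul hb2]
    rw [e_wp, e_ddp, e_2j, e_rhs1, e_rhs2, ← Real.rpow_add two_pos, ← Real.rpow_add two_pos,
      ← Real.rpow_add two_pos, ← Real.rpow_add two_pos]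
    congr 1
    rw [hE0, he1, he2]
    push_cast
    ring
  -- assemble
  set r1 : ℝ≥0∞ := ENNReal.ofReal ((2:ℝ) ^ e1) with hr1def
  set r2 : ℝ≥0∞ := ENNReal.ofReal ((2:ℝ) ^ e2) with hr2def
  have hr1lt : r1 < 1 := by
    rw [hr1def, ← ENNReal.ofReal_one]
    exact ENNReal.ofReal_lt_ofReal_iff_of_nonneg (by positivity) |>.mpr
      (Real.rpow_lt_one_of_one_lt_of_neg one_lt_two he1neg)
  have hr2lt : r2 < 1 := by
    rw [hr2def, ← ENNReal.ofReal_one]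
    exact ENNReal.ofReal_lt_ofReal_iff_of_nonneg (by positivity) |>.mpr
      (Real.rpow_lt_one_of_one_lt_of_neg one_lt_two he2neg)
  have hgeom : ∀ r : ℝ≥0∞, r < 1 → (∑' i : ℕ, r ^ i) ≠ ⊤ := by
    intro r hr
    rw [ENNReal.tsum_geometric]
    refine ENNReal.inv_ne_top.mpr ?_
    simp only [ne_eq, tsub_eq_zero_iff_le, not_le]
    exact hr
  have hcast2 : ∀ j : ℕ, ((2 ^ j : ℕ) : ℝ≥0∞) = ENNReal.ofReal ((2:ℝ) ^ j) := by
    intro j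
    rw [Nat.cast_pow, ENNReal.ofReal_pow hb2]
    congr 1
    simp
  have hsumk : ∀ n j : ℕ, (∑' k : Fin (2 ^ j), ∫⁻ ω, (F n j (k:ℕ) ω) ^ (2 * p) ∂P)
      = (ENNReal.ofReal ((2:ℝ) ^ E0) * M * r1 ^ n) * r2 ^ j := by
    intro n j
    have h1 : ∀ k : Fin (2 ^ j), ∫⁻ ω, (F n j (k:ℕ) ω) ^ (2 * p) ∂P
        = ENNReal.ofReal ((w n j) ^ (2 * p) * (dd n j) ^ p) * M := fun k => hsingle n j (k:ℕ)
    rw [tsum_congr h1, tsum_fintype, Finset.sum_const, Finset.card_univ, Fintype.card_fin,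
      nsmul_eq_mul, hcast2 j, ← mul_assoc, ← ENNReal.ofReal_mul (by positivity), hclaim n j,
      ENNReal.ofReal_mul (by positivity), ENNReal.ofReal_mul (by positivity),
      ENNReal.ofReal_pow (by positivity), ENNReal.ofReal_pow (by positivity), ← hr1def, ← hr2def]
    ring
  have hmeas2 : ∀ n : ℕ, Measurable fun ω =>
      ∑' j : ℕ, ∑' k : Fin (2 ^ j), (F n j (k:ℕ) ω) ^ (2 * p) := by
    intro n
    exact Measurable.ennreal_tsum fun j => Measurable.ennreal_tsum fun k =>
      (hFmeas n j (k:ℕ)).pow_const _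
  calc ∫⁻ ω, (⨆ n : ℕ, ⨆ j : ℕ, ⨆ k : Fin (2 ^ j), F n j (k:ℕ) ω) ^ (2 * p) ∂P
      ≤ ∫⁻ ω, ∑' n : ℕ, ∑' j : ℕ, ∑' k : Fin (2 ^ j), (F n j (k:ℕ) ω) ^ (2 * p) ∂P :=
        lintegral_mono hBS
    _ = ∑' n : ℕ, ∑' j : ℕ, ∑' k : Fin (2 ^ j), ∫⁻ ω, (F n j (k:ℕ) ω) ^ (2 * p) ∂P := by
        rw [lintegral_tsum fun n => (hmeas2 n).aemeasurable]
        refine tsum_congr fun n => ?_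
        rw [lintegral_tsum fun j => (Measurable.ennreal_tsum fun k : Fin (2 ^ j) =>
          (hFmeas n j (k:ℕ)).pow_const _).aemeasurable]
        refine tsum_congr fun j => ?_
        rw [lintegral_tsum fun k : Fin (2 ^ j) => ((hFmeas n j (k:ℕ)).pow_const _).aemeasurable]
    _ = ∑' n : ℕ, ∑' j : ℕ, (ENNReal.ofReal ((2:ℝ) ^ E0) * M * r1 ^ n) * r2 ^ j :=
        tsum_congr fun n => tsum_congr fun j => hsumk n j
    _ = ∑' n : ℕ, (ENNReal.ofReal ((2:ℝ) ^ E0) * M * r1 ^ n) * ∑' j : ℕ, r2 ^ j :=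
        tsum_congr fun n => ENNReal.tsum_mul_left
    _ = ((ENNReal.ofReal ((2:ℝ) ^ E0) * M) * ∑' n : ℕ, r1 ^ n) * ∑' j : ℕ, r2 ^ j := by
        rw [ENNReal.tsum_mul_right, ENNReal.tsum_mul_left]
    _ < ⊤ := by
        apply ENNReal.mul_lt_top
        · apply ENNReal.mul_lt_top
          · exact ENNReal.mul_lt_top ENNReal.ofReal_lt_top hMlt
          · exact lt_top_iff_ne_top.mpr (hgeom r1 hr1lt)
        · exact lt_top_iff_ne_top.mpr (hgeom r2 hr2lt)


end BMaux

open MeasureTheory Set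
open scoped ENNReal NNReal

/-- The weighted Hölder-type supremum `sup_{s,t ≥ 0, s ≠ t} Γ(s,t)^γ |u(s)-u(t)| /
(|s-t|^{(1-H)/2} (1+s+t)^{1/2})`, with `Γ(s,t) = (1+s+t)²/|s-t|`, as an extended
nonnegative real. -/
noncomputable def weightedHolderSup (H γ : ℝ) (u : ℝ → ℝ) : ℝ≥0∞ :=
  ⨆ p : {q : ℝ × ℝ // 0 ≤ q.1 ∧ 0 ≤ q.2 ∧ q.1 ≠ q.2},
    ENNReal.ofReal (((1 + p.1.1 + p.1.2) ^ 2 / |p.1.1 - p.1.2|) ^ γ *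
      |u p.1.1 - u p.1.2| /
      (|p.1.1 - p.1.2| ^ ((1 - H) / 2) * (1 + p.1.1 + p.1.2) ^ ((1 : ℝ) / 2)))

/-- For a standard one-dimensional Brownian motion `W` and any `H ∈ (0,1)` there is
`γ > 0` such that the weighted Hölder supremum of the sample paths is almost surely
finite and has finite moments of all orders. -/
theorem stmt3 {Ω : Type*} [MeasurableSpace Ω] (P : Measure Ω) [IsProbabilityMeasure P]
    (W : ℝ → Ω → ℝ)
    (hWmeas : ∀ t : ℝ, Measurable (W t))
    (hWcont : ∀ ω, ContinuousOn (fun t => W t ω) (Set.Ici (0 : ℝ)))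
    (hW0 : ∀ ω, W 0 ω = 0)
    (hWindep : ∀ (m : ℕ) (t : ℕ → ℝ), (∀ i, 0 ≤ t i) → Monotone t →
      ProbabilityTheory.iIndepFun (m := fun _ : Fin m => (inferInstance : MeasurableSpace ℝ))
        (fun (i : Fin m) ω => W (t (i + 1)) ω - W (t i) ω) P)
    (hWgauss : ∀ s t : ℝ, 0 ≤ s → 0 ≤ t →
      P.map (fun ω => W t ω - W s ω) = ProbabilityTheory.gaussianReal 0 (Real.toNNReal |t - s|))
    (H : ℝ) (hH : H ∈ Set.Ioo (0 : ℝ) 1) :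
    ∃ γ : ℝ, 0 < γ ∧
      (∀ᵐ ω ∂P, weightedHolderSup H γ (fun t => W t ω) < ⊤) ∧
      (∀ k : ℕ, (∫⁻ ω, (weightedHolderSup H γ (fun t => W t ω)) ^ k ∂P) < ⊤) := by
  obtain ⟨hH0, hH1⟩ := hH
  set γ : ℝ := min H (1 - H) / 8 with hγdef
  have hmin : 0 < min H (1 - H) := lt_min hH0 (by linarith)
  have hγpos : 0 < γ := by rw [hγdef]; linarith
  have hγH : γ ≤ H / 8 := by
    rw [hγdef]
    have := min_le_left H (1 - H)
    linarith
  have hγH' : γ ≤ (1 - H) / 8 := by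
    rw [hγdef]
    have := min_le_right H (1 - H)
    linarith
  set α : ℝ := γ + (1 - H) / 2 with hαdef
  set β : ℝ := 1 / 2 - 2 * γ with hβdef
  have hα : 0 < α := by rw [hαdef]; linarith
  have hβ : 0 < β := by rw [hβdef]; linarith
  have h2α : 1 - 2 * α = H - 2 * γ := by rw [hαdef]; ring
  have h12 : 1 - 2 * α - 2 * β < 0 := by rw [hαdef, hβdef]; linarith
  have hHγ : 0 < H - 2 * γ := by linarith
  set B : Ω → ℝ≥0∞ := fun ω => ⨆ n : ℕ, ⨆ j : ℕ, ⨆ k : Fin (2 ^ j),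
    ENNReal.ofReal ((2:ℝ) ^ (-(n:ℝ) * β) * ((2:ℝ) ^ (n+1) / 2 ^ j) ^ (-α) *
      |W (((k:ℝ) + 1) * ((2:ℝ) ^ (n+1) / 2 ^ j)) ω -
       W ((k:ℝ) * ((2:ℝ) ^ (n+1) / 2 ^ j)) ω|) with hBdef
  have hBmeas : Measurable B := by
    apply Measurable.iSup; intro n
    apply Measurable.iSup; intro j
    apply Measurable.iSup; intro k
    exact (((hWmeas _).sub (hWmeas _)).abs.const_mul _).ennreal_ofReal
  set C : ℝ≥0∞ := ENNReal.ofReal (3 * 2 ^ α * (1 - (2:ℝ) ^ (-α))⁻¹) with hCdef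
  have hmaster : ∀ ω, weightedHolderSup H γ (fun t => W t ω) ≤ C * B ω := by
    intro ω
    rw [weightedHolderSup]
    apply iSup_le
    rintro ⟨⟨s, t⟩, hs, ht, hst⟩
    dsimp only
    have hBle : ∀ n j k : ℕ, k < 2 ^ j →
        ENNReal.ofReal ((2:ℝ) ^ (-(n:ℝ) * β) * ((2:ℝ) ^ (n+1) / 2 ^ j) ^ (-α) *
          |W (((k:ℝ) + 1) * ((2:ℝ) ^ (n+1) / 2 ^ j)) ω -
           W ((k:ℝ) * ((2:ℝ) ^ (n+1) / 2 ^ j)) ω|) ≤ B ω := by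
      intro n j k hk
      rw [hBdef]
      exact le_iSup_of_le n (le_iSup_of_le j (le_iSup_of_le (⟨k, hk⟩ : Fin (2 ^ j)) (le_refl _)))
    rcases lt_or_gt_of_ne hst with h | h
    · exact BMaux.master_bound (hWcont ω) hαdef hβdef hα hβ.le (B ω) hBle hs ht h
    · rw [show (1:ℝ) + s + t = 1 + t + s by ring, abs_sub_comm s t,
        abs_sub_comm (W s ω) (W t ω)]
      exact BMaux.master_bound (hWcont ω) hαdef hβdef hα hβ.le (B ω) hBle ht hs h
  have hmom : ∀ p : ℕ, 1 < (p:ℝ) * (H - 2 * γ) → ∫⁻ ω, (B ω) ^ (2 * p) ∂P < ⊤ := by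
    intro p hp
    have hp' : 1 < (p:ℝ) * (1 - 2 * α) := by rw [h2α]; exact hp
    exact BMaux.moment_bound P W hWmeas hWgauss hβ.le p hp' h12
  set p₀ : ℕ := ⌊(H - 2 * γ)⁻¹⌋₊ + 1 with hp₀def
  have hp₀ : 1 < (p₀:ℝ) * (H - 2 * γ) := by
    have h1 : (H - 2 * γ)⁻¹ < (p₀:ℝ) := by
      rw [hp₀def]
      push_cast
      exact Nat.lt_floor_add_one _
    calc 1 = (H - 2 * γ)⁻¹ * (H - 2 * γ) := (inv_mul_cancel₀ hHγ.ne').symm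
      _ < (p₀:ℝ) * (H - 2 * γ) := mul_lt_mul_of_pos_right h1 hHγ
  refine ⟨γ, hγpos, ?_, ?_⟩
  · have hae := ae_lt_top (hBmeas.pow_const (2 * p₀)) (hmom p₀ hp₀).ne
    filter_upwards [hae] with ω hω
    have hBω : B ω < ⊤ := by
      by_contra hc
      rw [top_le_iff.mp (not_lt.mp hc), ENNReal.top_pow (by omega)] at hω
      exact absurd hω (lt_irrefl ⊤)
    calc weightedHolderSup H γ (fun t => W t ω) ≤ C * B ω := hmaster ω
      _ < ⊤ := ENNReal.mul_lt_top ENNReal.ofReal_lt_top hBω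
  · intro k
    set p : ℕ := max p₀ k with hpdef
    have hple : (p₀:ℝ) ≤ (p:ℝ) := by exact_mod_cast le_max_left p₀ k
    have hp : 1 < (p:ℝ) * (H - 2 * γ) :=
      lt_of_lt_of_le hp₀ (mul_le_mul_of_nonneg_right hple hHγ.le)
    have hk2p : k ≤ 2 * p := by
      have := le_max_right p₀ k
      omega
    have hmono : ∀ ω, (weightedHolderSup H γ (fun t => W t ω)) ^ k
        ≤ C ^ k * (1 + (B ω) ^ (2 * p)) := by
      intro ω
      calc (weightedHolderSup H γ (fun t => W t ω)) ^ k ≤ (C * B ω) ^ k :=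
            pow_le_pow_left' (hmaster ω) k
        _ = C ^ k * (B ω) ^ k := mul_pow _ _ _
        _ ≤ C ^ k * (1 + (B ω) ^ (2 * p)) := by
            apply mul_le_mul_right
            rcases le_total (B ω) 1 with hb | hb
            · calc (B ω) ^ k ≤ 1 ^ k := pow_le_pow_left' hb k
                _ = 1 := one_pow k
                _ ≤ 1 + (B ω) ^ (2 * p) := le_self_add
            · calc (B ω) ^ k ≤ (B ω) ^ (2 * p) := pow_le_pow_right' hb hk2p
                _ ≤ 1 + (B ω) ^ (2 * p) := le_add_self
    calc ∫⁻ ω, (weightedHolderSup H γ (fun t => W t ω)) ^ k ∂P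
        ≤ ∫⁻ ω, C ^ k * (1 + (B ω) ^ (2 * p)) ∂P := lintegral_mono hmono
      _ = C ^ k * (1 + ∫⁻ ω, (B ω) ^ (2 * p) ∂P) := by
          rw [lintegral_const_mul (f := fun ω => 1 + (B ω) ^ (2 * p)) _ (measurable_const.add (hBmeas.pow_const _))]
          congr 1
          rw [lintegral_add_left measurable_const]
          simp
      _ < ⊤ := by
          apply ENNReal.mul_lt_top
          · exact ENNReal.pow_lt_top ENNReal.ofReal_lt_top
          · exact ENNReal.add_lt_top.mpr ⟨ENNReal.one_lt_top, hmom p hp⟩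
end

section
/- Let n ≥ 1, let f : ℝⁿ → ℝⁿ be continuously differentiable and satisfy: (A1) there exist constants C₁, C₂, C₃ > 0 with ⟨f(x) − f(y), x − y⟩ ≤ min{C₁ − C₂‖x−y‖², C₃‖x−y‖²} for all x, y ∈ ℝⁿ; (A2) there exist C, N > 0 with ‖f(x)‖ ≤ C(1+‖x‖)^N and ‖Df(x)‖ ≤ C(1+‖x‖)^N for all x. Let σ be an n×n real matrix and T > 0. Then there exists a unique map Φ_T : ℝⁿ × C([0,T],ℝⁿ) → C([0,T],ℝⁿ) such that for every x ∈ ℝⁿ and b ∈ C([0,T],ℝⁿ) with b(0) = 0, Φ_T(x,b)(t) = σ b(t) + x + ∫₀^t f(Φ_T(x,b)(s)) ds for all t ∈ [0,T]; furthermore Φ_T is locally Lipschitz continuous with respect to (x,b), where C([0,T],ℝⁿ) carries the supremum norm. -/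
open MeasureTheory Set Real Function
open scoped RealInnerProductSpace NNReal

section auxiliary

set_option linter.unusedSectionVars false

variable {E : Type*} [NormedAddCommGroup E] [InnerProductSpace ℝ E] [CompleteSpace E]

/-- monotonicity of `gronwallBound 0 K ε` in `x`. -/
lemma gb_mono_x {K ε x y : ℝ} (hK : 0 ≤ K) (hε : 0 ≤ ε) (hxy : x ≤ y) :
    gronwallBound 0 K ε x ≤ gronwallBound 0 K ε y := by
  rcases eq_or_lt_of_le hK with h0 | hK
  · rw [← h0, gronwallBound_K0]
    simp only [zero_add]
    exact mul_le_mul_of_nonneg_left hxy hε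
  · rw [gronwallBound_of_K_ne_0 hK.ne']
    simp only [zero_mul, zero_add]
    have : Real.exp (K * x) ≤ Real.exp (K * y) :=
      Real.exp_le_exp.mpr (mul_le_mul_of_nonneg_left hxy hK.le)
    have hεK : 0 ≤ ε / K := div_nonneg hε hK.le
    nlinarith [this, hεK]

lemma gb_nonneg {K ε x : ℝ} (hK : 0 ≤ K) (hε : 0 ≤ ε) (hx : 0 ≤ x) :
    0 ≤ gronwallBound 0 K ε x := by
  have := gb_mono_x hK hε hx (y := x)
  rwa [gronwallBound_x0] at this

/-- the radial truncation map. -/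
noncomputable def ballProj (R : ℝ) (z : E) : E := (R / max R ‖z‖) • z

lemma ballProj_norm_le {R : ℝ} (hR : 0 < R) (z : E) : ‖ballProj R z‖ ≤ R := by
  rw [ballProj, norm_smul, Real.norm_eq_abs, abs_of_nonneg
    (div_nonneg hR.le (le_trans hR.le (le_max_left _ _)))]
  rw [div_mul_eq_mul_div, div_le_iff₀ (lt_of_lt_of_le hR (le_max_left _ _))]
  have : ‖z‖ ≤ max R ‖z‖ := le_max_right _ _
  nlinarith [hR, this]

lemma ballProj_of_le {R : ℝ} (hR : 0 < R) {z : E} (hz : ‖z‖ ≤ R) : ballProj R z = z := by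
  rw [ballProj, max_eq_left hz, div_self hR.ne', one_smul]

lemma ballProj_lipschitz {R : ℝ} (hR : 0 < R) : LipschitzWith 2 (ballProj (E := E) R) := by
  apply LipschitzWith.of_dist_le_mul
  intro z y
  simp only [dist_eq_norm]
  set a := max R ‖z‖ with ha
  set b := max R ‖y‖ with hb
  have haR : R ≤ a := le_max_left _ _
  have hbR : R ≤ b := le_max_left _ _
  have ha0 : 0 < a := lt_of_lt_of_le hR haR
  have hb0 : 0 < b := lt_of_lt_of_le hR hbR
  have hyb : ‖y‖ ≤ b := le_max_right _ _
  have habs : |b - a| ≤ ‖z - y‖ := by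
    have h1 : |max ‖y‖ R - max ‖z‖ R| ≤ |‖y‖ - ‖z‖| := abs_max_sub_max_le_abs _ _ _
    rw [max_comm ‖y‖ R, max_comm ‖z‖ R, ← ha, ← hb] at h1
    refine h1.trans ?_
    calc |‖y‖ - ‖z‖| ≤ ‖y - z‖ := abs_norm_sub_norm_le y z
      _ = ‖z - y‖ := norm_sub_rev y z
  have key : ballProj R z - ballProj R y = (R/a) • (z - y) + ((R/a) - (R/b)) • y := by
    rw [ballProj, ballProj, ← ha, ← hb]
    module
  rw [key]
  have step1 : ‖(R/a) • (z - y) + ((R/a) - (R/b)) • y‖ ≤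
      (R/a) * ‖z - y‖ + |R/a - R/b| * ‖y‖ := by
    refine (norm_add_le _ _).trans ?_
    rw [norm_smul, norm_smul, Real.norm_eq_abs, Real.norm_eq_abs,
      abs_of_nonneg (div_nonneg hR.le ha0.le)]
  refine step1.trans ?_
  have h2 : (R/a) * ‖z - y‖ ≤ ‖z - y‖ := by
    apply mul_le_of_le_one_left (norm_nonneg _)
    exact div_le_one_of_le₀ haR ha0.le
  have h3 : |R/a - R/b| * ‖y‖ ≤ ‖z - y‖ := by
    have e1 : R/a - R/b = R * (b - a) / (a * b) := by field_simp
    rw [e1, abs_div, abs_mul, abs_of_pos hR, abs_of_pos (mul_pos ha0 hb0)]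
    rw [div_mul_eq_mul_div, div_le_iff₀ (mul_pos ha0 hb0)]
    calc R * |b - a| * ‖y‖ ≤ R * |b - a| * b :=
          mul_le_mul_of_nonneg_left hyb (by positivity)
      _ ≤ (a * |b - a|) * b := by
          apply mul_le_mul_of_nonneg_right _ hb0.le
          exact mul_le_mul_of_nonneg_right haR (abs_nonneg _)
      _ ≤ (a * ‖z - y‖) * b := by
          apply mul_le_mul_of_nonneg_right _ hb0.le
          exact mul_le_mul_of_nonneg_left habs ha0.le
      _ = ‖z - y‖ * (a * b) := by ring
  push_cast
  linarith

lemma exists_sol_lipschitz {T : ℝ} (hT : 0 < T) (g : E → E) (L : ℝ≥0) (hg : LipschitzWith L g)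
    (w : C(Icc (0:ℝ) T, E)) : ∃ u : C(Icc (0:ℝ) T, E),
      ∀ t : Icc (0:ℝ) T, u t = w t + ∫ s in (0:ℝ)..(t:ℝ), g (IccExtend hT.le u s) := by
  have hcont : ∀ u : C(Icc (0:ℝ) T, E), Continuous fun s : ℝ => g (IccExtend hT.le u s) :=
    fun u => hg.continuous.comp u.continuous.Icc_extend'
  have hint : ∀ (u : C(Icc (0:ℝ) T, E)) (a b : ℝ),
      IntervalIntegrable (fun s => g (IccExtend hT.le u s)) volume a b :=
    fun u a b => (hcont u).intervalIntegrable a b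
  set F : C(Icc (0:ℝ) T, E) → C(Icc (0:ℝ) T, E) := fun u =>
    ⟨fun t => w t + ∫ s in (0:ℝ)..(t:ℝ), g (IccExtend hT.le u s),
      w.continuous.add ((intervalIntegral.continuous_primitive (hint u) 0).comp
        continuous_subtype_val)⟩ with hF
  have hFapp : ∀ (u : C(Icc (0:ℝ) T, E)) (t : Icc (0:ℝ) T),
      F u t = w t + ∫ s in (0:ℝ)..(t:ℝ), g (IccExtend hT.le u s) := fun u t => rfl
  have hdiff : ∀ (u u' : C(Icc (0:ℝ) T, E)) (t : Icc (0:ℝ) T),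
      F u t - F u' t =
        ∫ s in (0:ℝ)..(t:ℝ), (g (IccExtend hT.le u s) - g (IccExtend hT.le u' s)) := by
    intro u u' t
    rw [hFapp, hFapp, intervalIntegral.integral_sub (hint u 0 t) (hint u' 0 t)]
    abel
  have key : ∀ (k : ℕ) (u u' : C(Icc (0:ℝ) T, E)) (t : Icc (0:ℝ) T),
      ‖F^[k] u t - F^[k] u' t‖ ≤ (L : ℝ)^k * (t:ℝ)^k / (Nat.factorial k) * dist u u' := by
    intro k
    induction k with
    | zero =>
      intro u u' t
      simpa [← dist_eq_norm] using ContinuousMap.dist_apply_le_dist (f := u) (g := u') t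
    | succ k ih =>
      intro u u' t
      rw [Function.iterate_succ_apply', Function.iterate_succ_apply', hdiff]
      have ht0 : (0:ℝ) ≤ (t:ℝ) := t.2.1
      have htT : (t:ℝ) ≤ T := t.2.2
      have hbd : ∀ᵐ s ∂(volume.restrict (Set.uIoc (0:ℝ) (t:ℝ))),
          ‖g (IccExtend hT.le (F^[k] u) s) - g (IccExtend hT.le (F^[k] u') s)‖ ≤
          (L:ℝ) * ((L : ℝ)^k * s^k / (Nat.factorial k) * dist u u') := by
        refine (ae_restrict_iff' measurableSet_uIoc).mpr (ae_of_all _ fun s hs => ?_)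
        rw [uIoc_of_le ht0] at hs
        have hsmem : s ∈ Icc (0:ℝ) T := ⟨hs.1.le, hs.2.trans htT⟩
        rw [IccExtend_of_mem _ _ hsmem, IccExtend_of_mem _ _ hsmem]
        calc ‖g ((F^[k] u) ⟨s, hsmem⟩) - g ((F^[k] u') ⟨s, hsmem⟩)‖
            ≤ (L:ℝ) * ‖(F^[k] u) ⟨s, hsmem⟩ - (F^[k] u') ⟨s, hsmem⟩‖ := by
              simpa [dist_eq_norm] using hg.dist_le_mul ((F^[k] u) ⟨s, hsmem⟩) ((F^[k] u') ⟨s, hsmem⟩)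
          _ ≤ (L:ℝ) * ((L : ℝ)^k * s^k / (Nat.factorial k) * dist u u') := by
              have := ih u u' ⟨s, hsmem⟩
              exact mul_le_mul_of_nonneg_left this L.2
      have hbint : IntervalIntegrable
          (fun s => (L:ℝ) * ((L : ℝ)^k * s^k / (Nat.factorial k) * dist u u')) volume 0 (t:ℝ) := by
        apply Continuous.intervalIntegrable
        continuity
      refine (intervalIntegral.norm_integral_le_abs_of_norm_le hbd hbint).trans ?_
      have hval : ∫ s in (0:ℝ)..(t:ℝ), (L:ℝ) * ((L : ℝ)^k * s^k / (Nat.factorial k) * dist u u')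
          = (L:ℝ)^(k+1) * (t:ℝ)^(k+1) / (Nat.factorial (k+1)) * dist u u' := by
        rw [intervalIntegral.integral_const_mul]
        have : (fun s : ℝ => (L : ℝ)^k * s^k / (Nat.factorial k) * dist u u') =
            fun s : ℝ => ((L : ℝ)^k / (Nat.factorial k) * dist u u') * s^k := by
          funext s; ring
        rw [this, intervalIntegral.integral_const_mul, integral_pow]
        rw [Nat.factorial_succ]
        have hkf : ((Nat.factorial k : ℝ)) ≠ 0 := Nat.cast_ne_zero.mpr (Nat.factorial_pos k).ne'
        have hk1 : ((k:ℝ) + 1) ≠ 0 := by positivity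
        field_simp
        push_cast
        ring
      rw [hval, abs_of_nonneg (mul_nonneg (by positivity) dist_nonneg)]
  -- Lipschitz bound for iterates
  have hFiter : ∀ m : ℕ, LipschitzWith (Real.toNNReal ((L:ℝ)^m * T^m / (Nat.factorial m))) (F^[m]) := by
    intro m
    apply LipschitzWith.of_dist_le_mul
    intro u u'
    have hfac : (0:ℝ) < (Nat.factorial m : ℝ) := Nat.cast_pos.mpr (Nat.factorial_pos m)
    have hnn : (0:ℝ) ≤ (L:ℝ)^m * T^m / (Nat.factorial m) := by positivity
    rw [Real.coe_toNNReal _ hnn]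
    refine (ContinuousMap.dist_le (by positivity)).mpr fun t => ?_
    rw [dist_eq_norm]
    refine (key m u u' t).trans ?_
    have ht0 : (0:ℝ) ≤ (t:ℝ) := t.2.1
    have : (t:ℝ)^m ≤ T^m := pow_le_pow_left₀ ht0 t.2.2 m
    have hd : (0:ℝ) ≤ dist u u' := dist_nonneg
    gcongr
  obtain ⟨m, hm⟩ : ∃ m : ℕ, (L:ℝ)^m * T^m / (Nat.factorial m) < 1 := by
    have h := FloorSemiring.tendsto_pow_div_factorial_atTop ((L:ℝ) * T)
    obtain ⟨m, hm⟩ := (h.eventually (gt_mem_nhds one_pos)).exists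
    exact ⟨m, by rwa [mul_pow] at hm⟩
  have hContr : ContractingWith (Real.toNNReal ((L:ℝ)^m * T^m / (Nat.factorial m))) (F^[m]) :=
    ⟨Real.toNNReal_lt_one.mpr hm, hFiter m⟩
  haveI : Nonempty C(Icc (0:ℝ) T, E) := ⟨w⟩
  set u₀ := hContr.fixedPoint (F^[m]) with hu₀
  have hfix : Function.IsFixedPt (F^[m]) u₀ := hContr.fixedPoint_isFixedPt
  have hcomm : Function.IsFixedPt (F^[m]) (F u₀) := by
    show F^[m] (F u₀) = F u₀
    rw [← Function.iterate_succ_apply, Function.iterate_succ_apply']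
    exact congrArg F hfix
  have hFu : F u₀ = u₀ := by
    rw [hContr.fixedPoint_unique hcomm, ← hu₀, hContr.fixedPoint_unique hfix, ← hu₀]
  refine ⟨u₀, fun t => ?_⟩
  conv_lhs => rw [← hFu]
  exact hFapp u₀ t

lemma comparison' {T : ℝ} (hT : 0 < T) (f : E → E) (hfc : Continuous f)
    {R : ℝ} {L : ℝ≥0} (hL : LipschitzOnWith L f (Metric.closedBall 0 R))
    (w w' u u' : C(Icc (0:ℝ) T, E))
    (hu : ∀ t : Icc (0:ℝ) T, u t = w t + ∫ s in (0:ℝ)..(t:ℝ), f (IccExtend hT.le u s))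
    (hu' : ∀ t : Icc (0:ℝ) T, u' t = w' t + ∫ s in (0:ℝ)..(t:ℝ), f (IccExtend hT.le u' s))
    (hbu : ∀ t, ‖u t‖ ≤ R) (hbu' : ∀ t, ‖u' t‖ ≤ R) :
    ∀ t : Icc (0:ℝ) T, ‖(u t - w t) - (u' t - w' t)‖ ≤
      gronwallBound 0 L ((L:ℝ) * dist w w') T := by
  have hcu : Continuous fun s : ℝ => f (IccExtend hT.le u s) :=
    hfc.comp u.continuous.Icc_extend'
  have hcu' : Continuous fun s : ℝ => f (IccExtend hT.le u' s) :=
    hfc.comp u'.continuous.Icc_extend'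
  set G : ℝ → E := fun r =>
    ∫ s in (0:ℝ)..r, (f (IccExtend hT.le u s) - f (IccExtend hT.le u' s)) with hGdef
  have hcd : Continuous fun s : ℝ => f (IccExtend hT.le u s) - f (IccExtend hT.le u' s) :=
    hcu.sub hcu'
  have hG' : ∀ r : ℝ, HasDerivAt G
      (f (IccExtend hT.le u r) - f (IccExtend hT.le u' r)) r := fun r =>
    intervalIntegral.integral_hasDerivAt_right (hcd.intervalIntegrable 0 r)
      hcd.stronglyMeasurable.stronglyMeasurableAtFilter hcd.continuousAt
  have hGeq : ∀ t : Icc (0:ℝ) T, G t = (u t - w t) - (u' t - w' t) := by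
    intro t
    have h1 : u t - w t = ∫ s in (0:ℝ)..(t:ℝ), f (IccExtend hT.le u s) := by
      rw [hu t]; abel
    have h2 : u' t - w' t = ∫ s in (0:ℝ)..(t:ℝ), f (IccExtend hT.le u' s) := by
      rw [hu' t]; abel
    rw [h1, h2, hGdef]
    exact intervalIntegral.integral_sub (hcu.intervalIntegrable _ _) (hcu'.intervalIntegrable _ _)
  have main : ∀ x ∈ Icc (0:ℝ) T, ‖G x‖ ≤
      gronwallBound 0 L ((L:ℝ) * dist w w') (x - 0) := by
    apply norm_le_gronwallBound_of_norm_deriv_right_le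
      (fun r _ => (hG' r).continuousAt.continuousWithinAt)
      (fun r _ => (hG' r).hasDerivWithinAt)
    · simp [hGdef]
    · intro r hr
      have hrIcc : r ∈ Icc (0:ℝ) T := ⟨hr.1, hr.2.le⟩
      rw [IccExtend_of_mem _ _ hrIcc, IccExtend_of_mem _ _ hrIcc]
      set tr : Icc (0:ℝ) T := ⟨r, hrIcc⟩
      have hmem : u tr ∈ Metric.closedBall (0:E) R := by
        rw [Metric.mem_closedBall, dist_zero_right]; exact hbu tr
      have hmem' : u' tr ∈ Metric.closedBall (0:E) R := by
        rw [Metric.mem_closedBall, dist_zero_right]; exact hbu' tr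
      have hlip : ‖f (u tr) - f (u' tr)‖ ≤ (L:ℝ) * ‖u tr - u' tr‖ := by
        have := hL.dist_le_mul _ hmem _ hmem'
        rwa [dist_eq_norm, dist_eq_norm] at this
      refine hlip.trans ?_
      have hdec : u tr - u' tr = G r + (w tr - w' tr) := by
        have := hGeq tr
        simp only [tr] at this ⊢
        rw [this]; abel
      have : ‖u tr - u' tr‖ ≤ ‖G r‖ + dist w w' := by
        rw [hdec]
        refine (norm_add_le _ _).trans ?_
        have := ContinuousMap.dist_apply_le_dist (f := w) (g := w') tr
        rw [dist_eq_norm] at this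
        linarith
      calc (L:ℝ) * ‖u tr - u' tr‖ ≤ (L:ℝ) * (‖G r‖ + dist w w') :=
            mul_le_mul_of_nonneg_left this L.2
        _ = (L:ℝ) * ‖G r‖ + (L:ℝ) * dist w w' := by ring
  intro t
  rw [← hGeq t]
  refine (main t ⟨t.2.1, t.2.2⟩).trans ?_
  rw [sub_zero]
  exact gb_mono_x L.2 (mul_nonneg L.2 dist_nonneg) t.2.2

set_option maxHeartbeats 2000000 in
lemma apriori {T : ℝ} (hT : 0 < T) (f : E → E) (hfc : Continuous f)
    {C₁ C₂ : ℝ} (hC₁ : 0 < C₁) (hC₂ : 0 < C₂)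
    (hdis : ∀ x y : E, ⟪f x - f y, x - y⟫ ≤ C₁ - C₂ * ‖x - y‖ ^ 2)
    (w : C(Icc (0:ℝ) T, E)) {M : ℝ} (hM : ∀ t : Icc (0:ℝ) T, ‖f (w t)‖ ≤ M) (hM0 : 0 ≤ M)
    {R : ℝ} (hR1 : 1 ≤ R) (hRw : ‖w‖ ≤ R) (u : C(Icc (0:ℝ) T, E))
    (hu : ∀ t : Icc (0:ℝ) T,
      u t = w t + ∫ s in (0:ℝ)..(t:ℝ), f (ballProj R (IccExtend hT.le u s))) :
    ∀ t : Icc (0:ℝ) T, ‖u t - w t‖ ^ 2 ≤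
      gronwallBound 0 (4*M + 2*(C₁ + ‖f 0‖^2/(4*C₂)))
        (2*C₁ + 2*(C₁ + ‖f 0‖^2/(4*C₂))*‖w‖ + (4*M + 2*(C₁ + ‖f 0‖^2/(4*C₂)))) T := by
  have hR0 : (0:ℝ) < R := lt_of_lt_of_le one_pos hR1
  set K₀ : ℝ := C₁ + ‖f 0‖^2/(4*C₂) with hK₀
  have hK₀0 : 0 < K₀ := by positivity
  set KK : ℝ := 4*M + 2*K₀ with hKK
  have hKK0 : 0 ≤ KK := by positivity
  set εε : ℝ := 2*C₁ + 2*K₀*‖w‖ + KK with hεε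
  have hεε0 : 0 ≤ εε := by positivity
  -- self bound
  have hself : ∀ y : E, ⟪f y, y⟫ ≤ K₀ := by
    intro y
    have h1 := hdis y 0
    rw [sub_zero] at h1
    have h2 : ⟪f y, y⟫ = ⟪f y - f 0, y⟫ + ⟪f 0, y⟫ := by
      rw [inner_sub_left]; ring
    have h3 : ⟪f 0, y⟫ ≤ ‖f 0‖ * ‖y‖ := real_inner_le_norm _ _
    have hD : 4*C₂*(‖f 0‖^2/(4*C₂)) = ‖f 0‖^2 := by field_simp
    have key : ‖f 0‖ * ‖y‖ - C₂ * ‖y‖^2 ≤ ‖f 0‖^2/(4*C₂) := by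
      rw [← mul_le_mul_iff_right₀ (show (0:ℝ) < 4*C₂ by positivity), hD]
      nlinarith [sq_nonneg (2*C₂*‖y‖ - ‖f 0‖)]
    rw [h2, hK₀]
    linarith
  have hcont : Continuous fun s : ℝ => f (ballProj R (IccExtend hT.le u s)) :=
    hfc.comp ((ballProj_lipschitz hR0).continuous.comp u.continuous.Icc_extend')
  set v : ℝ → E := fun r => ∫ s in (0:ℝ)..r, f (ballProj R (IccExtend hT.le u s)) with hvdef
  have hv' : ∀ r : ℝ, HasDerivAt v (f (ballProj R (IccExtend hT.le u r))) r := fun r =>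
    intervalIntegral.integral_hasDerivAt_right (hcont.intervalIntegrable 0 r)
      hcont.stronglyMeasurable.stronglyMeasurableAtFilter hcont.continuousAt
  have hveq : ∀ t : Icc (0:ℝ) T, v t = u t - w t := by
    intro t; rw [hu t]; simp [hvdef]
  set φ : ℝ → ℝ := fun r => ⟪v r, v r⟫ with hφdef
  have hφ' : ∀ r : ℝ, HasDerivAt φ
      (2 * ⟪f (ballProj R (IccExtend hT.le u r)), v r⟫) r := by
    intro r
    have := (hv' r).inner ℝ (hv' r)
    refine this.congr_deriv ?_
    rw [real_inner_comm]; ring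
  have main : ∀ x ∈ Icc (0:ℝ) T, φ x ≤ gronwallBound 0 KK εε (x - 0) := by
    apply le_gronwallBound_of_liminf_deriv_right_le
      (fun r _ => (hφ' r).continuousAt.continuousWithinAt)
      (fun x _ r hr => ((hφ' x).hasDerivWithinAt (s := Ici x)).liminf_right_slope_le hr)
    · have hv0 : v (0:ℝ) = 0 := intervalIntegral.integral_same
      show ⟪v 0, v 0⟫ ≤ (0:ℝ)
      rw [hv0]
      simp
    · intro r hr
      have hrIcc : r ∈ Icc (0:ℝ) T := ⟨hr.1, hr.2.le⟩
      set tr : Icc (0:ℝ) T := ⟨r, hrIcc⟩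
      rw [IccExtend_of_mem _ _ hrIcc]
      set z : E := u tr with hz
      set wt : E := w tr with hwt
      have hvv : v r = z - wt := hveq tr
      set a : ℝ := max R ‖z‖ with ha
      have haR : R ≤ a := le_max_left _ _
      have ha0 : 0 < a := lt_of_lt_of_le hR0 haR
      have hza : ‖z‖ ≤ a := le_max_right _ _
      set pz : E := ballProj R z with hpz
      have hwtw : ‖wt‖ ≤ ‖w‖ := w.norm_coe_le_norm tr
      have hwtR : ‖wt‖ ≤ R := hwtw.trans hRw
      -- (i)+(ii)
      have hi : ⟪f pz - f wt, pz - wt⟫ ≤ C₁ := by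
        have := hdis pz wt
        nlinarith [sq_nonneg ‖pz - wt‖, mul_nonneg hC₂.le (sq_nonneg ‖pz - wt‖)]
      have hpzwt : ‖pz - wt‖ ≤ 2 * ‖z - wt‖ := by
        have h1 := (ballProj_lipschitz (E := E) hR0).dist_le_mul z wt
        rw [ballProj_of_le hR0 hwtR] at h1
        rw [dist_eq_norm, dist_eq_norm] at h1
        simpa [hpz] using h1
      have hMwt : ‖f wt‖ ≤ M := hM tr
      have hii : ⟪f wt, pz - wt⟫ ≤ M * (2 * ‖z - wt‖) := by
        refine (real_inner_le_norm _ _).trans ?_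
        have := mul_le_mul hMwt hpzwt (norm_nonneg _) hM0
        linarith
      have hiii : ⟪f pz, z - pz⟫ ≤ K₀ * ‖z - wt‖ + K₀ * ‖w‖ := by
        have hzpz : z - pz = ((a - R)/R) • pz := by
          rw [hpz, ballProj, ← ha, smul_smul]
          have h1 : (a - R)/R * (R / a) = 1 - R/a := by
            field_simp
          rw [h1, sub_smul, one_smul]
        rw [hzpz, real_inner_smul_right]
        have hc0 : 0 ≤ (a - R)/R := div_nonneg (by linarith) hR0.le
        have h1 : ((a - R)/R) * ⟪f pz, pz⟫ ≤ ((a - R)/R) * K₀ :=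
          mul_le_mul_of_nonneg_left (hself pz) hc0
        have h2 : (a - R)/R ≤ ‖z‖ := by
          have haz : a - R ≤ ‖z‖ := by
            have : a ≤ R + ‖z‖ := max_le (by linarith [norm_nonneg z]) (by linarith [hR0]) 
            linarith
          calc (a - R)/R ≤ (a - R)/1 := by
                apply div_le_div_of_nonneg_left (by linarith) one_pos hR1 -- check direction
              _ = a - R := by rw [div_one]
              _ ≤ ‖z‖ := haz
        have hztri : ‖z‖ ≤ ‖z - wt‖ + ‖w‖ := by
          have h4 := norm_add_le (z - wt) wt
          rw [sub_add_cancel] at h4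
          linarith
        have h5 : (a - R)/R * K₀ ≤ (‖z - wt‖ + ‖w‖) * K₀ :=
          mul_le_mul_of_nonneg_right (h2.trans hztri) hK₀0.le
        nlinarith [h1, h5]
      -- combine
      have hsplit : ⟪f pz, z - wt⟫ = ⟪f pz, pz - wt⟫ + ⟪f pz, z - pz⟫ := by
        rw [← inner_add_right]
        congr 1
        abel
      have hipii : ⟪f pz, pz - wt⟫ ≤ C₁ + M * (2 * ‖z - wt‖) := by
        have : ⟪f pz, pz - wt⟫ = ⟪f pz - f wt, pz - wt⟫ + ⟪f wt, pz - wt⟫ := by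
          rw [inner_sub_left]; ring
        rw [this]; linarith
      have hnormsq : φ r = ‖z - wt‖^2 := by
        show ⟪v r, v r⟫ = _
        rw [hvv, real_inner_self_eq_norm_sq]
      have hvle : ‖z - wt‖ ≤ 1 + ‖z - wt‖^2 := by nlinarith [sq_nonneg (‖z - wt‖ - 1)]
      rw [hvv, hnormsq]
      have htotal : ⟪f pz, z - wt⟫ ≤ C₁ + (2*M + K₀) * ‖z - wt‖ + K₀ * ‖w‖ := by
        rw [hsplit]; linarith
      have h6 : (4*M+2*K₀) * ‖z - wt‖ ≤ (4*M+2*K₀) * (1 + ‖z - wt‖^2) :=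
        mul_le_mul_of_nonneg_left hvle (by positivity)
      calc 2 * ⟪f pz, z - wt⟫ ≤ 2*C₁ + (4*M+2*K₀) * ‖z - wt‖ + 2*(K₀ * ‖w‖) := by linarith
        _ ≤ 2*C₁ + (4*M+2*K₀) * (1 + ‖z - wt‖^2) + 2*(K₀ * ‖w‖) := by linarith
        _ = KK * ‖z - wt‖^2 + εε := by rw [hKK, hεε, hK₀]; ring
  intro t
  have h1 : ‖u t - w t‖^2 = φ t := by
    have : φ (t:ℝ) = ⟪v (t:ℝ), v (t:ℝ)⟫ := rfl
    rw [this, hveq t, real_inner_self_eq_norm_sq]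
  rw [h1]
  refine (main t ⟨t.2.1, t.2.2⟩).trans ?_
  rw [sub_zero]
  exact gb_mono_x hKK0 hεε0 t.2.2

lemma gb_mono_eps {K ε ε' x : ℝ} (hK : 0 ≤ K) (hx : 0 ≤ x) (h : ε ≤ ε') :
    gronwallBound 0 K ε x ≤ gronwallBound 0 K ε' x := by
  rcases eq_or_lt_of_le hK with h0 | hKpos
  · rw [← h0, gronwallBound_K0, gronwallBound_K0]
    simp only [zero_add]
    exact mul_le_mul_of_nonneg_right h hx
  · rw [gronwallBound_of_K_ne_0 hKpos.ne', gronwallBound_of_K_ne_0 hKpos.ne']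
    simp only [zero_mul, zero_add]
    have hexp : 0 ≤ Real.exp (K * x) - 1 := by
      have : (1:ℝ) ≤ Real.exp (K * x) := Real.one_le_exp (by positivity)
      linarith
    have h2 : ε / K ≤ ε' / K := by gcongr
    exact mul_le_mul_of_nonneg_right h2 hexp
  
lemma gb_lin {L δ TT : ℝ} (hL : 0 ≤ L) (hδ : 0 ≤ δ) (hTT : 0 ≤ TT) :
    gronwallBound 0 L (L*δ) TT + δ ≤ Real.exp (L*TT) * δ := by
  rcases eq_or_lt_of_le hL with h0 | hLpos
  · rw [← h0, gronwallBound_K0]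
    simp
  · rw [gronwallBound_of_K_ne_0 hLpos.ne']
    rw [mul_comm L δ, mul_div_assoc, div_self hLpos.ne', mul_one]
    ring_nf
    nlinarith [Real.one_le_exp (by positivity : (0:ℝ) ≤ L * TT)]

set_option maxHeartbeats 2000000 in
lemma solution_map {T : ℝ} (hT : 0 < T) (f : E → E) (hfc : Continuous f)
    {C₁ C₂ : ℝ} (hC₁ : 0 < C₁) (hC₂ : 0 < C₂)
    (hdis : ∀ x y : E, ⟪f x - f y, x - y⟫ ≤ C₁ - C₂ * ‖x - y‖ ^ 2)
    (Lc : ℝ → ℝ≥0) (hLc : ∀ R : ℝ, 0 ≤ R → LipschitzOnWith (Lc R) f (Metric.closedBall 0 R)) :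
    ∃ S : C(Icc (0:ℝ) T, E) → C(Icc (0:ℝ) T, E),
      (∀ w, ∀ t : Icc (0:ℝ) T,
        S w t = w t + ∫ s in (0:ℝ)..(t:ℝ), f (IccExtend hT.le (S w) s)) ∧
      (∀ w u : C(Icc (0:ℝ) T, E), (∀ t : Icc (0:ℝ) T,
        u t = w t + ∫ s in (0:ℝ)..(t:ℝ), f (IccExtend hT.le u s)) → u = S w) ∧
      LocallyLipschitz S := by
  classical
  set K₀ : ℝ := C₁ + ‖f 0‖^2/(4*C₂) with hK₀def
  have hK₀0 : 0 < K₀ := by positivity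
  set Mr : ℝ → ℝ := fun r => ‖f 0‖ + (Lc r : ℝ) * r with hMrdef
  have hMr0 : ∀ r : ℝ, 0 ≤ r → 0 ≤ Mr r := fun r hr => by
    have : (0:ℝ) ≤ (Lc r : ℝ) * r := mul_nonneg (Lc r).2 hr
    simp only [hMrdef]; positivity
  set KKf : ℝ → ℝ := fun r => 4*(Mr r) + 2*K₀ with hKKfdef
  have hKKf0 : ∀ r : ℝ, 0 ≤ r → 0 ≤ KKf r := fun r hr => by
    have := hMr0 r hr; simp only [hKKfdef]; positivity
  set εεf : ℝ → ℝ := fun r => 2*C₁ + 2*K₀*r + KKf r with hεεfdef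
  have hεεf0 : ∀ r : ℝ, 0 ≤ r → 0 ≤ εεf r := fun r hr => by
    have := hKKf0 r hr; simp only [hεεfdef]; positivity
  set Qf : ℝ → ℝ := fun r => gronwallBound 0 (KKf r) (εεf r) T with hQfdef
  have hQf0 : ∀ r : ℝ, 0 ≤ r → 0 ≤ Qf r := fun r hr =>
    gb_nonneg (hKKf0 r hr) (hεεf0 r hr) hT.le
  set BB : ℝ → ℝ := fun r => r + Real.sqrt (Qf r) with hBBdef
  have hBB0 : ∀ r : ℝ, 0 ≤ r → 0 ≤ BB r := fun r hr => by
    have := Real.sqrt_nonneg (Qf r); simp only [hBBdef]; positivity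
  have hBBr : ∀ r : ℝ, r ≤ BB r := fun r => by
    have := Real.sqrt_nonneg (Qf r); simp only [hBBdef]; linarith
  -- bound on f along a path within radius r
  have hMb : ∀ r : ℝ, 0 ≤ r → ∀ w : C(Icc (0:ℝ) T, E), ‖w‖ ≤ r →
      ∀ t : Icc (0:ℝ) T, ‖f (w t)‖ ≤ Mr r := by
    intro r hr w hw t
    have hwt : ‖w t‖ ≤ r := (w.norm_coe_le_norm t).trans hw
    have hmem : w t ∈ Metric.closedBall (0:E) r := by
      rw [Metric.mem_closedBall, dist_zero_right]; exact hwt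
    have h0 : (0:E) ∈ Metric.closedBall (0:E) r := Metric.mem_closedBall_self hr
    have h1 := (hLc r hr).dist_le_mul _ hmem _ h0
    rw [dist_eq_norm, dist_zero_right] at h1
    have h2 := norm_sub_norm_le (f (w t)) (f 0)
    have h3 : (Lc r : ℝ) * ‖w t‖ ≤ (Lc r : ℝ) * r := mul_le_mul_of_nonneg_left hwt (Lc r).2
    simp only [hMrdef]
    linarith
  -- every solution with ‖w‖ ≤ r is bounded by BB r
  have hboundSol : ∀ r : ℝ, 0 ≤ r → ∀ w u : C(Icc (0:ℝ) T, E), ‖w‖ ≤ r →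
      (∀ t : Icc (0:ℝ) T, u t = w t + ∫ s in (0:ℝ)..(t:ℝ), f (IccExtend hT.le u s)) →
      ∀ t : Icc (0:ℝ) T, ‖u t‖ ≤ BB r := by
    intro r hr w u hw hu t
    set R₀ : ℝ := max 1 (max ‖u‖ r) with hR₀def
    have hR₀1 : 1 ≤ R₀ := le_max_left _ _
    have hR₀0 : 0 < R₀ := lt_of_lt_of_le one_pos hR₀1
    have hR₀w : ‖w‖ ≤ R₀ := hw.trans ((le_max_right _ _).trans (le_max_right _ _))
    have hproj : ∀ s : ℝ, ballProj R₀ (IccExtend hT.le u s) = IccExtend hT.le u s := by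
      intro s
      apply ballProj_of_le hR₀0
      have : ‖u (projIcc 0 T hT.le s)‖ ≤ ‖u‖ := u.norm_coe_le_norm _
      exact this.trans ((le_max_left _ _).trans (le_max_right _ _))
    have hu' : ∀ t : Icc (0:ℝ) T,
        u t = w t + ∫ s in (0:ℝ)..(t:ℝ), f (ballProj R₀ (IccExtend hT.le u s)) := by
      intro t'
      rw [hu t']
      congr 1
      apply intervalIntegral.integral_congr
      intro s _
      simp only [hproj]
    have hap := apriori hT f hfc hC₁ hC₂ hdis w (hMb r hr w hw) (hMr0 r hr) hR₀1 hR₀w u hu'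
    have h1 : ‖u t - w t‖^2 ≤ Qf r := by
      refine (hap t).trans ?_
      simp only [hQfdef, hKKfdef, hεεfdef, hMrdef]
      apply gb_mono_eps (by have := hMr0 r hr; simp only [hMrdef] at this; positivity) hT.le
      have hKw : (C₁ + ‖f 0‖^2/(4*C₂)) * ‖w‖ ≤ (C₁ + ‖f 0‖^2/(4*C₂)) * r :=
        mul_le_mul_of_nonneg_left hw (by positivity)
      simp only [hK₀def]
      linarith
    have h2 : ‖u t - w t‖ ≤ Real.sqrt (Qf r) := by
      rw [← Real.sqrt_sq (norm_nonneg (u t - w t))]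
      exact Real.sqrt_le_sqrt h1
    have h3 := norm_add_le (u t - w t) (w t)
    rw [sub_add_cancel] at h3
    have h4 : ‖w t‖ ≤ r := (w.norm_coe_le_norm t).trans hw
    simp only [hBBdef]
    linarith
  -- existence
  have hexists : ∀ w : C(Icc (0:ℝ) T, E), ∃ u : C(Icc (0:ℝ) T, E),
      ∀ t : Icc (0:ℝ) T, u t = w t + ∫ s in (0:ℝ)..(t:ℝ), f (IccExtend hT.le u s) := by
    intro w
    set r : ℝ := ‖w‖ with hrdef
    have hr : 0 ≤ r := norm_nonneg w
    set R : ℝ := BB r + 1 with hRdef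
    have hR1 : 1 ≤ R := by have := hBB0 r hr; simp only [hRdef]; linarith
    have hR0 : 0 < R := lt_of_lt_of_le one_pos hR1
    have hRw : ‖w‖ ≤ R := by have := hBBr r; simp only [hRdef]; linarith
    have hgLip : LipschitzWith (Lc R * 2) (fun z : E => f (ballProj R z)) := by
      apply LipschitzWith.of_dist_le_mul
      intro z y
      have hmz : ballProj R z ∈ Metric.closedBall (0:E) R := by
        rw [Metric.mem_closedBall, dist_zero_right]; exact ballProj_norm_le hR0 z
      have hmy : ballProj R y ∈ Metric.closedBall (0:E) R := by
        rw [Metric.mem_closedBall, dist_zero_right]; exact ballProj_norm_le hR0 y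
      have h1 := (hLc R hR0.le).dist_le_mul _ hmz _ hmy
      have h2 := (ballProj_lipschitz hR0).dist_le_mul z y
      push_cast
      calc dist (f (ballProj R z)) (f (ballProj R y)) ≤
            (Lc R : ℝ) * dist (ballProj R z) (ballProj R y) := h1
        _ ≤ (Lc R : ℝ) * (2 * dist z y) := mul_le_mul_of_nonneg_left h2 (Lc R).2
        _ = (Lc R : ℝ) * 2 * dist z y := by ring
    obtain ⟨u, hu⟩ := exists_sol_lipschitz hT _ _ hgLip w
    have hap := apriori hT f hfc hC₁ hC₂ hdis w (hMb r hr w le_rfl) (hMr0 r hr) hR1 hRw u hu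
    have hball : ∀ t : Icc (0:ℝ) T, ‖u t‖ ≤ BB r := by
      intro t
      have h1 : ‖u t - w t‖^2 ≤ Qf r := by
        refine (hap t).trans ?_
        simp only [hQfdef, hKKfdef, hεεfdef, hMrdef]
        apply gb_mono_eps (by have := hMr0 r hr; simp only [hMrdef] at this; positivity) hT.le
        have hKw : (C₁ + ‖f 0‖^2/(4*C₂)) * ‖w‖ ≤ (C₁ + ‖f 0‖^2/(4*C₂)) * r :=
          mul_le_mul_of_nonneg_left hrdef.ge (by positivity)
        simp only [hK₀def]
        linarith
      have h2 : ‖u t - w t‖ ≤ Real.sqrt (Qf r) := by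
        rw [← Real.sqrt_sq (norm_nonneg (u t - w t))]
        exact Real.sqrt_le_sqrt h1
      have h3 := norm_add_le (u t - w t) (w t)
      rw [sub_add_cancel] at h3
      have h4 : ‖w t‖ ≤ r := w.norm_coe_le_norm t
      simp only [hBBdef]
      linarith
    refine ⟨u, fun t => ?_⟩
    rw [hu t]
    congr 1
    apply intervalIntegral.integral_congr
    intro s _
    show f (ballProj R (IccExtend hT.le u s)) = f (IccExtend hT.le u s)
    have hnorm : ‖IccExtend hT.le u s‖ ≤ R := by
      have : ‖u (projIcc 0 T hT.le s)‖ ≤ BB r := hball _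
      simp only [hRdef]
      calc ‖IccExtend hT.le u s‖ = ‖u (projIcc 0 T hT.le s)‖ := rfl
        _ ≤ BB r := this
        _ ≤ BB r + 1 := by linarith
    rw [ballProj_of_le hR0 hnorm]
  -- uniqueness
  have huniq : ∀ w u u' : C(Icc (0:ℝ) T, E),
      (∀ t : Icc (0:ℝ) T, u t = w t + ∫ s in (0:ℝ)..(t:ℝ), f (IccExtend hT.le u s)) →
      (∀ t : Icc (0:ℝ) T, u' t = w t + ∫ s in (0:ℝ)..(t:ℝ), f (IccExtend hT.le u' s)) →
      u = u' := by
    intro w u u' hu hu'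
    set r : ℝ := ‖w‖ with hrdef
    have hr : 0 ≤ r := norm_nonneg w
    have hbu := hboundSol r hr w u le_rfl hu
    have hbu' := hboundSol r hr w u' le_rfl hu'
    have hcomp := comparison' hT f hfc (hLc (BB r) (hBB0 r hr)) w w u u' hu hu' hbu hbu'
    ext t
    have := hcomp t
    rw [dist_self, mul_zero, gronwallBound_ε0_δ0, sub_sub_sub_cancel_right] at this
    have h0 : u t - u' t = 0 := norm_le_zero_iff.mp this
    exact sub_eq_zero.mp h0
  -- the solution map
  set S : C(Icc (0:ℝ) T, E) → C(Icc (0:ℝ) T, E) := fun w => Classical.choose (hexists w)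
    with hSdef
  have hS : ∀ w, ∀ t : Icc (0:ℝ) T,
      S w t = w t + ∫ s in (0:ℝ)..(t:ℝ), f (IccExtend hT.le (S w) s) := fun w =>
    Classical.choose_spec (hexists w)
  have hSuniq : ∀ w u : C(Icc (0:ℝ) T, E), (∀ t : Icc (0:ℝ) T,
      u t = w t + ∫ s in (0:ℝ)..(t:ℝ), f (IccExtend hT.le u s)) → u = S w := by
    intro w u hu
    exact huniq w u (S w) hu (hS w)
  -- Lipschitz on balls
  have hSlip : ∀ r : ℝ, 0 ≤ r →
      LipschitzOnWith (Real.toNNReal (Real.exp ((Lc (BB r) : ℝ) * T)))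
        S (Metric.closedBall 0 r) := by
    intro r hr
    apply LipschitzOnWith.of_dist_le_mul
    intro w hw w' hw'
    rw [Metric.mem_closedBall, dist_zero_right] at hw hw'
    have hbu := hboundSol r hr w (S w) hw (hS w)
    have hbu' := hboundSol r hr w' (S w') hw' (hS w')
    have hcomp := comparison' hT f hfc (hLc (BB r) (hBB0 r hr)) w w' (S w) (S w')
      (hS w) (hS w') hbu hbu'
    rw [Real.coe_toNNReal _ (Real.exp_nonneg _)]
    refine (ContinuousMap.dist_le (by positivity)).mpr fun t => ?_
    have h1 := hcomp t
    have h2 : dist (S w t) (S w' t) ≤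
        ‖(S w t - w t) - (S w' t - w' t)‖ + dist (w t) (w' t) := by
      rw [dist_eq_norm, dist_eq_norm]
      have h3 := norm_add_le ((S w t - w t) - (S w' t - w' t)) (w t - w' t)
      have h4 : ((S w t - w t) - (S w' t - w' t)) + (w t - w' t) = S w t - S w' t := by abel
      rw [h4] at h3
      exact h3
    have h5 : dist (w t) (w' t) ≤ dist w w' := ContinuousMap.dist_apply_le_dist t
    have h6 := gb_lin (L := (Lc (BB r) : ℝ)) (δ := dist w w') (TT := T)
      (Lc (BB r)).2 dist_nonneg hT.le
    have h7 : gronwallBound 0 (Lc (BB r) : ℝ) ((Lc (BB r) : ℝ) * dist (w t) (w' t)) T ≤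
        gronwallBound 0 (Lc (BB r) : ℝ) ((Lc (BB r) : ℝ) * dist w w') T := by
      exact gb_mono_eps (Lc (BB r)).2 hT.le (mul_le_mul_of_nonneg_left h5 (Lc (BB r)).2)
    -- h1 already has dist w w' inside
    linarith [h1, h2, h5, h6]
  have hSloc : LocallyLipschitz S := by
    intro w
    refine ⟨_, Metric.closedBall 0 (‖w‖ + 1), ?_, hSlip (‖w‖ + 1) (by positivity)⟩
    have hsub : Metric.ball w 1 ⊆ Metric.closedBall 0 (‖w‖ + 1) := by
      intro y hy
      rw [Metric.mem_ball] at hy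
      rw [Metric.mem_closedBall]
      calc dist y 0 ≤ dist y w + dist w 0 := dist_triangle _ _ _
        _ ≤ 1 + ‖w‖ := by rw [dist_zero_right]; linarith
        _ = ‖w‖ + 1 := by ring
    exact Filter.mem_of_superset (Metric.ball_mem_nhds w one_pos) hsub
  exact ⟨S, hS, hSuniq, hSloc⟩

end auxiliary

/-- Existence, uniqueness and local Lipschitz dependence for the pathwise solution
map `Φ_T` of the ODE `Φ_T(x,b)(t) = σ b(t) + x + ∫₀ᵗ f(Φ_T(x,b)(s)) ds`, where
`b` ranges over the continuous functions on `[0,T]` vanishing at `0`. -/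
theorem stmt5 (n : ℕ) (hn : 1 ≤ n)
    (f : EuclideanSpace ℝ (Fin n) → EuclideanSpace ℝ (Fin n)) (hf : ContDiff ℝ 1 f)
    (C₁ C₂ C₃ C N : ℝ) (hC₁ : 0 < C₁) (hC₂ : 0 < C₂) (hC₃ : 0 < C₃)
    (hC : 0 < C) (hN : 0 < N)
    (hA1 : ∀ x y : EuclideanSpace ℝ (Fin n),
      ⟪f x - f y, x - y⟫ ≤ min (C₁ - C₂ * ‖x - y‖ ^ 2) (C₃ * ‖x - y‖ ^ 2))
    (hA2 : ∀ x : EuclideanSpace ℝ (Fin n),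
      ‖f x‖ ≤ C * (1 + ‖x‖) ^ N ∧ ‖fderiv ℝ f x‖ ≤ C * (1 + ‖x‖) ^ N)
    (σ : Matrix (Fin n) (Fin n) ℝ) (T : ℝ) (hT : 0 < T) :
    ∃ Φ : EuclideanSpace ℝ (Fin n) × C(Set.Icc (0 : ℝ) T, EuclideanSpace ℝ (Fin n)) →
        C(Set.Icc (0 : ℝ) T, EuclideanSpace ℝ (Fin n)),
      (∀ x b, b ⟨0, Set.left_mem_Icc.mpr hT.le⟩ = 0 →
        ∀ t : Set.Icc (0 : ℝ) T,
          Φ (x, b) t = Matrix.toEuclideanLin σ (b t) + x +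
            ∫ s in (0 : ℝ)..(t : ℝ), f (Set.IccExtend hT.le (Φ (x, b)) s)) ∧
      LocallyLipschitz Φ ∧
      (∀ Φ' : EuclideanSpace ℝ (Fin n) × C(Set.Icc (0 : ℝ) T, EuclideanSpace ℝ (Fin n)) →
          C(Set.Icc (0 : ℝ) T, EuclideanSpace ℝ (Fin n)),
        (∀ x b, b ⟨0, Set.left_mem_Icc.mpr hT.le⟩ = 0 →
          ∀ t : Set.Icc (0 : ℝ) T,
            Φ' (x, b) t = Matrix.toEuclideanLin σ (b t) + x +
              ∫ s in (0 : ℝ)..(t : ℝ), f (Set.IccExtend hT.le (Φ' (x, b)) s)) →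
        ∀ x b, b ⟨0, Set.left_mem_Icc.mpr hT.le⟩ = 0 → Φ' (x, b) = Φ (x, b)) := by
  classical
  have hfc : Continuous f := hf.continuous
  have hdis : ∀ x y : EuclideanSpace ℝ (Fin n),
      ⟪f x - f y, x - y⟫ ≤ C₁ - C₂ * ‖x - y‖ ^ 2 :=
    fun x y => (hA1 x y).trans (min_le_left _ _)
  set Lc : ℝ → ℝ≥0 := fun R => Real.toNNReal (C * (1+R)^N) with hLcdef
  have hLc : ∀ R : ℝ, 0 ≤ R → LipschitzOnWith (Lc R) f (Metric.closedBall 0 R) := by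
    intro R hR
    refine Convex.lipschitzOnWith_of_nnnorm_fderiv_le
      (fun x _ => hf.differentiable one_ne_zero x) ?_ (convex_closedBall 0 R)
    intro x hx
    rw [← NNReal.coe_le_coe, coe_nnnorm, hLcdef, Real.coe_toNNReal _ (by positivity)]
    have hx' : ‖x‖ ≤ R := by rwa [Metric.mem_closedBall, dist_zero_right] at hx
    refine (hA2 x).2.trans ?_
    have h1 : (1 + ‖x‖ : ℝ) ^ N ≤ (1 + R) ^ N :=
      Real.rpow_le_rpow (by positivity) (by linarith) hN.le
    exact mul_le_mul_of_nonneg_left h1 hC.le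
  obtain ⟨S, hS, hSuniq, hSloc⟩ := solution_map hT f hfc hC₁ hC₂ hdis Lc hLc
  set A : EuclideanSpace ℝ (Fin n) →L[ℝ] EuclideanSpace ℝ (Fin n) :=
    LinearMap.toContinuousLinearMap (Matrix.toEuclideanLin σ) with hAdef
  set W : EuclideanSpace ℝ (Fin n) × C(Icc (0:ℝ) T, EuclideanSpace ℝ (Fin n)) →
      C(Icc (0:ℝ) T, EuclideanSpace ℝ (Fin n)) := fun p =>
    ⟨fun t => A (p.2 t) + p.1, (A.continuous.comp p.2.continuous).add continuous_const⟩
    with hWdef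
  have hWapp : ∀ p t, W p t = A (p.2 t) + p.1 := fun p t => rfl
  have hAcoe : ∀ z, A z = Matrix.toEuclideanLin σ z := fun z => rfl
  have hWlip : LipschitzWith (Real.toNNReal (‖A‖ + 1)) W := by
    apply LipschitzWith.of_dist_le_mul
    intro p q
    rw [Real.coe_toNNReal _ (by positivity)]
    refine (ContinuousMap.dist_le (by positivity)).mpr fun t => ?_
    rw [hWapp, hWapp, dist_eq_norm]
    have he : (A (p.2 t) + p.1) - (A (q.2 t) + q.1)
        = (A (p.2 t) - A (q.2 t)) + (p.1 - q.1) := by abel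
    rw [he]
    have h1 : ‖A (p.2 t) - A (q.2 t)‖ ≤ ‖A‖ * ‖p.2 t - q.2 t‖ := by
      rw [← map_sub]; exact A.le_opNorm _
    have h2 : ‖p.2 t - q.2 t‖ ≤ dist p q := by
      rw [← dist_eq_norm]
      refine (ContinuousMap.dist_apply_le_dist t).trans ?_
      rw [Prod.dist_eq]; exact le_max_right _ _
    have h3 : ‖p.1 - q.1‖ ≤ dist p q := by
      rw [← dist_eq_norm, Prod.dist_eq]; exact le_max_left _ _
    have h4 : ‖A‖ * ‖p.2 t - q.2 t‖ ≤ ‖A‖ * dist p q :=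
      mul_le_mul_of_nonneg_left h2 (norm_nonneg A)
    calc ‖(A (p.2 t) - A (q.2 t)) + (p.1 - q.1)‖
        ≤ ‖A (p.2 t) - A (q.2 t)‖ + ‖p.1 - q.1‖ := norm_add_le _ _
      _ ≤ ‖A‖ * dist p q + dist p q := by linarith
      _ = (‖A‖ + 1) * dist p q := by ring
  refine ⟨fun p => S (W p), ?_, ?_, ?_⟩
  · intro x b hb t
    have h := hS (W (x, b)) t
    rw [h, hWapp]
    rfl
  · exact hSloc.comp hWlip.locallyLipschitz
  · intro Φ' hΦ' x b hb
    refine hSuniq (W (x, b)) (Φ' (x, b)) fun t => ?_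
    rw [hΦ' x b hb t, hWapp]
    rfl
end

section
/- Let X and W be Polish spaces, let (P_t)_{t≥0} be a Feller transition semigroup on W, let (θ_t)_{t>0} be a semiflow of measurable maps on W satisfying θ_t^* P_t(w,·) = δ_w for every w ∈ W and t > 0, and let φ : [0,∞) × X × W → X satisfy: φ_0(x,w) = x; the cocycle property φ_{s+t}(x,w) = φ_s(φ_t(x, θ_s w), w) for all s,t > 0, x ∈ X, w ∈ W; and continuity of (x,w) ↦ φ_t(x,w) for each fixed t ≥ 0. Define Q_t(x,w; A×B) = ∫_B δ_{φ_t(x,w')}(A) P_t(w, dw') for Borel sets A ⊆ X, B ⊆ W. Then (Q_t)_{t≥0} is a Feller transition semigroup on X × W; moreover, if ν is an invariant probability measure of (P_t) and μ is a probability measure on X × W whose marginal on W equals ν, then the marginal of Q_t μ on W equals ν for every t ≥ 0. -/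
open MeasureTheory Set
open scoped NNReal ENNReal

section Aux
open Filter
open scoped Topology


lemma myMapBind {α β γ : Type*} [MeasurableSpace α] [MeasurableSpace β] [MeasurableSpace γ]
    (m : Measure α) {κ : α → Measure β} (hκ : Measurable κ) {f : β → γ} (hf : Measurable f) :
    (m.bind κ).map f = m.bind (fun a => (κ a).map f) := by
  rw [← Measure.bind_dirac_eq_map _ hf,
    Measure.bind_bind hκ.aemeasurable (show Measurable fun x => Measure.dirac (f x) from Measure.measurable_dirac.comp hf).aemeasurable]
  congr 1; funext a; rw [Measure.bind_dirac_eq_map _ hf]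

lemma myBindMap {α β γ : Type*} [MeasurableSpace α] [MeasurableSpace β] [MeasurableSpace γ]
    (m : Measure α) {g : α → β} (hg : Measurable g) {f : β → Measure γ} (hf : Measurable f) :
    (m.map g).bind f = m.bind (fun a => f (g a)) := by
  rw [← Measure.bind_dirac_eq_map _ hg,
    Measure.bind_bind (show Measurable fun x => Measure.dirac (g x) from Measure.measurable_dirac.comp hg).aemeasurable hf.aemeasurable]
  congr 1; funext a; exact Measure.dirac_bind hf (g a)


lemma myWeakConv {X W : Type*} [TopologicalSpace X]
    [TopologicalSpace W] [PolishSpace W] [MeasurableSpace W] [BorelSpace W]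
    (G : BoundedContinuousFunction (X × W) ℝ)
    (x : ℕ → X) (x₀ : X) (hx : Tendsto x atTop (𝓝 x₀))
    (μs : ℕ → ProbabilityMeasure W) (μ : ProbabilityMeasure W)
    (hμ : Tendsto μs atTop (𝓝 μ)) :
    Tendsto (fun n => ∫ w, G (x n, w) ∂(μs n : Measure W)) atTop
      (𝓝 (∫ w, G (x₀, w) ∂(μ : Measure W))) := by
  classical
  have hcm : ∀ a : X, Continuous fun w : W => (a, w) :=
    fun a => continuous_const.prodMk continuous_id
  set g₀ : BoundedContinuousFunction W ℝ := G.compContinuous ⟨fun w => (x₀, w), hcm x₀⟩ with hg₀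
  have hT2 : Tendsto (fun n => ∫ w, G (x₀, w) ∂(μs n : Measure W)) atTop
      (𝓝 (∫ w, G (x₀, w) ∂(μ : Measure W))) := by
    have := MeasureTheory.ProbabilityMeasure.tendsto_iff_forall_integral_tendsto.mp hμ g₀
    simpa [hg₀] using this
  have hD : Tendsto (fun n => (∫ w, G (x n, w) ∂(μs n : Measure W))
      - ∫ w, G (x₀, w) ∂(μs n : Measure W)) atTop (𝓝 0) := by
    rw [NormedAddCommGroup.tendsto_nhds_zero]
    intro ε hε
    set M : ℝ := ‖G‖ with hM
    have hM0 : 0 ≤ M := norm_nonneg _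
    set ε' : ℝ := ε / 2 with hε'def
    have hε' : 0 < ε' := by positivity
    set A : ℕ → Set W := fun n => {w | ε' ≤ dist (G (x n, w)) (G (x₀, w))} with hA
    set B : ℕ → Set W := fun m => closure (⋃ n ∈ Ici m, A n) with hB
    have hBclosed : ∀ m, IsClosed (B m) := fun m => isClosed_closure
    have hBanti : Antitone B := by
      intro m m' h
      exact closure_mono (Set.biUnion_subset_biUnion_left (Ici_subset_Ici.mpr h))
    have hBempty : ⋂ m, B m = ∅ := by
      rw [Set.eq_empty_iff_forall_notMem]
      intro w hw
      have hc : ∀ᶠ p : X × W in 𝓝 (x₀, w), dist (G p) (G (x₀, w)) < ε' / 2 := by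
        have hball : Metric.ball (G (x₀, w)) (ε' / 2) ∈ 𝓝 (G (x₀, w)) :=
          Metric.ball_mem_nhds _ (by positivity)
        filter_upwards [(G.continuous.tendsto (x₀, w)) hball] with p hp
        simpa [Metric.mem_ball] using hp
      rw [nhds_prod_eq, Filter.eventually_prod_iff] at hc
      obtain ⟨pa, hpa, qa, hqa, hpq⟩ := hc
      obtain ⟨N, hN⟩ := eventually_atTop.mp (hx.eventually hpa)
      have hwB : w ∈ B N := mem_iInter.mp hw N
      obtain ⟨w', hw'⟩ := mem_closure_iff_nhds.mp hwB {w' | qa w'} hqa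
      obtain ⟨hw'q, hw'U⟩ := hw'
      simp only [mem_iUnion, mem_Ici, exists_prop] at hw'U
      obtain ⟨n, hn, hw'A⟩ := hw'U
      have h1 : dist (G (x n, w')) (G (x₀, w)) < ε' / 2 := hpq (hN n hn) hw'q
      have h2 : dist (G (x₀, w')) (G (x₀, w)) < ε' / 2 := hpq hpa.self_of_nhds hw'q
      have hlt : dist (G (x n, w')) (G (x₀, w')) < ε' := by
        calc dist (G (x n, w')) (G (x₀, w'))
            ≤ dist (G (x n, w')) (G (x₀, w)) + dist (G (x₀, w)) (G (x₀, w')) :=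
              dist_triangle _ _ _
          _ < ε' / 2 + ε' / 2 := by
              have := h2
              rw [dist_comm] at this
              linarith
          _ = ε' := by ring
      exact absurd hw'A (not_le.mpr hlt)
    have hμB : Tendsto (fun m => (μ : Measure W) (B m)) atTop (𝓝 0) := by
      have h := tendsto_measure_iInter_atTop (μ := (μ : Measure W))
        (fun m => ((hBclosed m).measurableSet).nullMeasurableSet) hBanti
        ⟨0, measure_ne_top _ _⟩
      rw [hBempty] at h
      simpa [Function.comp_def] using h
    set δ : ℝ≥0∞ := ENNReal.ofReal (ε / (8 * (M + 1))) with hδ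
    have hδpos : 0 < δ := ENNReal.ofReal_pos.mpr (by positivity)
    obtain ⟨m, hm⟩ := (hμB.eventually (Iio_mem_nhds hδpos)).exists
    have hls := MeasureTheory.ProbabilityMeasure.limsup_measure_closed_le_of_tendsto hμ
      (hBclosed m)
    have hev : ∀ᶠ n in atTop, (μs n : Measure W) (B m) < δ :=
      Filter.eventually_lt_of_limsup_lt (lt_of_le_of_lt hls hm)
    filter_upwards [hev, eventually_ge_atTop m] with n hn hmn
    -- integrability
    have hint1 : Integrable (fun w => G (x n, w)) (μs n : Measure W) :=
      (G.compContinuous ⟨fun w => (x n, w), hcm (x n)⟩).integrable _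
    have hint2 : Integrable (fun w => G (x₀, w)) (μs n : Measure W) :=
      (G.compContinuous ⟨fun w => (x₀, w), hcm x₀⟩).integrable _
    have hBm : MeasurableSet (B m) := (hBclosed m).measurableSet
    have hinth : Integrable (fun w => ε' + (B m).indicator (fun _ => 2 * M) w)
        (μs n : Measure W) :=
      (integrable_const ε').add ((integrable_const (2 * M)).indicator hBm)
    have hpt : ∀ w, ‖G (x n, w) - G (x₀, w)‖ ≤ ε' + (B m).indicator (fun _ => 2 * M) w := by
      intro w
      by_cases hwB : w ∈ B m
      · rw [indicator_of_mem hwB]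
        have b1 : ‖G (x n, w)‖ ≤ M := G.norm_coe_le_norm _
        have b2 : ‖G (x₀, w)‖ ≤ M := G.norm_coe_le_norm _
        have := norm_sub_le (G (x n, w)) (G (x₀, w))
        linarith
      · rw [indicator_of_notMem hwB, add_zero]
        have hwA : w ∉ A n := fun hwa =>
          hwB (subset_closure (mem_biUnion hmn hwa))
        have : dist (G (x n, w)) (G (x₀, w)) < ε' := not_le.mp hwA
        rw [Real.dist_eq] at this
        exact this.le
    have hmono : (∫ w, ‖G (x n, w) - G (x₀, w)‖ ∂(μs n : Measure W))
        ≤ ∫ w, (ε' + (B m).indicator (fun _ => 2 * M) w) ∂(μs n : Measure W) :=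
      integral_mono (hint1.sub hint2).norm hinth hpt
    have hcalc : (∫ w, (ε' + (B m).indicator (fun _ => 2 * M) w) ∂(μs n : Measure W))
        = ε' + ((μs n : Measure W) (B m)).toReal * (2 * M) := by
      rw [integral_add (integrable_const ε') ((integrable_const (2 * M)).indicator hBm),
        integral_const, integral_indicator_const _ hBm]
      simp [smul_eq_mul]
      exact Or.inl rfl
    have hδtop : δ ≠ ⊤ := ENNReal.ofReal_ne_top
    have hBn : ((μs n : Measure W) (B m)).toReal ≤ ε / (8 * (M + 1)) := by
      have h1 : ((μs n : Measure W) (B m)).toReal ≤ δ.toReal :=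
        ENNReal.toReal_mono hδtop hn.le
      calc ((μs n : Measure W) (B m)).toReal ≤ δ.toReal := h1
        _ ≤ ε / (8 * (M + 1)) := by
            rw [hδ, ENNReal.toReal_ofReal (by positivity)]
    calc ‖(∫ w, G (x n, w) ∂(μs n : Measure W)) - ∫ w, G (x₀, w) ∂(μs n : Measure W)‖
        = ‖∫ w, (G (x n, w) - G (x₀, w)) ∂(μs n : Measure W)‖ := by
          rw [integral_sub hint1 hint2]
      _ ≤ ∫ w, ‖G (x n, w) - G (x₀, w)‖ ∂(μs n : Measure W) := norm_integral_le_integral_norm _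
      _ ≤ ε' + ((μs n : Measure W) (B m)).toReal * (2 * M) := by
          rw [← hcalc]; exact hmono
      _ ≤ ε' + (ε / (8 * (M + 1))) * (2 * M) := by
          have hb := hBn
          nlinarith [ENNReal.toReal_nonneg (a := (μs n : Measure W) (B m))]
      _ < ε := by
          rw [hε'def]
          have h1 : (ε / (8 * (M + 1))) * (2 * M) ≤ ε / 4 := by
            rw [div_mul_eq_mul_div, div_le_div_iff₀ (by positivity) (by norm_num)]
            nlinarith
          linarith
  have := hD.add hT2
  simpa using this


end Aux

/-- The transition function `Q_t` of the one-point process of a stochastic dynamical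
system: `Q_t(x,w;·)` is the law of `(φ_t(x,w'), w')` with `w'` drawn from `P_t(w,·)`. -/
noncomputable def QKer {X W : Type*} [MeasurableSpace X] [MeasurableSpace W]
    (φ : ℝ≥0 → X → W → X) (P : ℝ≥0 → W → Measure W) (t : ℝ≥0) (z : X × W) :
    Measure (X × W) :=
  (P t z.2).map fun w' => (φ t z.1 w', w')

/-- Lemma 2.14: given a stationary noise process `(W, P_t, θ_t)` and a cocycle `φ`,
the family `Q_t` is a Feller transition semigroup on `X × W`, and it preserves the
class of measures whose `W`-marginal is the invariant measure of `P_t`. -/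
theorem stmt6 {X W : Type*}
    [TopologicalSpace X] [PolishSpace X] [MeasurableSpace X] [BorelSpace X]
    [TopologicalSpace W] [PolishSpace W] [MeasurableSpace W] [BorelSpace W]
    (P : ℝ≥0 → W → Measure W)
    (hPmeas : ∀ t, Measurable (P t))
    (hPprob : ∀ t w, IsProbabilityMeasure (P t w))
    (hP0 : ∀ w, P 0 w = Measure.dirac w)
    (hPsemi : ∀ s t : ℝ≥0, ∀ w, P (s + t) w = (P t w).bind (P s))
    (hPFeller : ∀ (t : ℝ≥0) (ψ : BoundedContinuousFunction W ℝ),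
      Continuous fun w => ∫ y, ψ y ∂(P t w))
    (θ : ℝ≥0 → W → W)
    (hθmeas : ∀ t, Measurable (θ t))
    (hθsemi : ∀ s t : ℝ≥0, 0 < s → 0 < t → θ (s + t) = θ s ∘ θ t)
    (hθP : ∀ (t : ℝ≥0) (w : W), (P t w).map (θ t) = Measure.dirac w)
    (φ : ℝ≥0 → X → W → X)
    (hφ0 : ∀ x w, φ 0 x w = x)
    (hφcocycle : ∀ s t : ℝ≥0, 0 < s → 0 < t → ∀ x w,
      φ (s + t) x w = φ s (φ t x (θ s w)) w)
    (hφcont : ∀ t : ℝ≥0, Continuous fun p : X × W => φ t p.1 p.2) :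
    (∀ t, Measurable (QKer φ P t)) ∧
    (∀ t z, IsProbabilityMeasure (QKer φ P t z)) ∧
    (∀ z, QKer φ P 0 z = Measure.dirac z) ∧
    (∀ s t : ℝ≥0, ∀ z, QKer φ P (s + t) z = (QKer φ P t z).bind (QKer φ P s)) ∧
    (∀ (t : ℝ≥0) (ψ : BoundedContinuousFunction (X × W) ℝ),
      Continuous fun z => ∫ y, ψ y ∂(QKer φ P t z)) ∧
    (∀ ν : Measure W, IsProbabilityMeasure ν → (∀ t, ν.bind (P t) = ν) →
      ∀ μ : Measure (X × W), IsProbabilityMeasure μ → μ.map Prod.snd = ν →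
        ∀ t, (μ.bind (QKer φ P t)).map Prod.snd = ν) := by

  classical
  -- measurability of the slice maps
  have hφm : ∀ (t : ℝ≥0) (x : X), Measurable fun w' : W => (φ t x w', w') := by
    intro t x
    exact (((hφcont t).comp (continuous_const.prodMk continuous_id)).prodMk
      continuous_id).measurable
  have hGc : ∀ t : ℝ≥0, Continuous fun p : X × W => ((φ t p.1 p.2, p.2) : X × W) :=
    fun t => (hφcont t).prodMk continuous_snd
  have hGm : ∀ t : ℝ≥0, Measurable fun p : X × W => ((φ t p.1 p.2, p.2) : X × W) :=
    fun t => (hGc t).measurable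
  -- Part 1 : measurability
  have h1 : ∀ t, Measurable (QKer φ P t) := by
    intro t
    haveI : ProbabilityTheory.IsMarkovKernel
        (⟨P t, hPmeas t⟩ : ProbabilityTheory.Kernel W W) := ⟨hPprob t⟩
    set κ : ProbabilityTheory.Kernel (X × W) (X × W) :=
      ProbabilityTheory.Kernel.map
        (ProbabilityTheory.Kernel.prod
          (ProbabilityTheory.Kernel.deterministic (Prod.fst : X × W → X) measurable_fst)
          (ProbabilityTheory.Kernel.comap (⟨P t, hPmeas t⟩ : ProbabilityTheory.Kernel W W)
            Prod.snd measurable_snd))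
        (fun p : X × W => (φ t p.1 p.2, p.2)) with hκdef
    have hκ : ∀ z, κ z = QKer φ P t z := by
      intro z
      rw [hκdef, ProbabilityTheory.Kernel.map_apply _ (hGm t),
        ProbabilityTheory.Kernel.prod_apply, ProbabilityTheory.Kernel.deterministic_apply,
        ProbabilityTheory.Kernel.comap_apply, Measure.dirac_prod,
        Measure.map_map (hGm t) measurable_prodMk_left]
      rfl
    have : QKer φ P t = fun z => κ z := by funext z; rw [hκ z]
    rw [this]
    exact κ.measurable
  -- Part 2 : probability
  have h2 : ∀ t z, IsProbabilityMeasure (QKer φ P t z) := by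
    intro t z
    haveI := hPprob t z.2
    exact Measure.isProbabilityMeasure_map (hφm t z.1).aemeasurable
  -- Part 3 : time zero
  have h3 : ∀ z, QKer φ P 0 z = Measure.dirac z := by
    intro z
    rw [QKer, hP0, Measure.map_dirac' (hφm 0 z.1), hφ0]
  -- Part 4 : Chapman–Kolmogorov
  have h4 : ∀ s t : ℝ≥0, ∀ z, QKer φ P (s + t) z = (QKer φ P t z).bind (QKer φ P s) := by
    intro s t z
    by_cases hs : s = 0
    · subst hs
      rw [show (QKer φ P 0) = (fun z : X × W => Measure.dirac z) from funext h3,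
        Measure.bind_dirac, zero_add]
    by_cases ht : t = 0
    · subst ht
      rw [add_zero, h3 z, Measure.dirac_bind (h1 s)]
    have hs' : 0 < s := pos_iff_ne_zero.mpr hs
    have ht' : 0 < t := pos_iff_ne_zero.mpr ht
    have key : ∀ w' : W, (P s w').map (fun w'' => (φ (s + t) z.1 w'', w''))
        = QKer φ P s (φ t z.1 w', w') := by
      intro w'
      show _ = (P s w').map (fun w'' => (φ s (φ t z.1 w') w'', w''))
      apply Measure.map_congr
      have hae : ∀ᵐ w'' ∂(P s w'), θ s w'' = w' := by
        have h2' := congrArg (fun m : Measure W => m ({w'}ᶜ)) (hθP s w')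
        rw [Measure.map_apply (hθmeas s) (measurableSet_singleton w').compl] at h2'
        have hset : {w'' | ¬ θ s w'' = w'} = (θ s) ⁻¹' ({w'}ᶜ) := by ext a; simp
        rw [ae_iff, hset, h2', Measure.dirac_apply' _ (measurableSet_singleton w').compl]
        simp
      filter_upwards [hae] with w'' hw''
      rw [hφcocycle s t hs' ht' z.1 w'', hw'']
    calc QKer φ P (s + t) z
        = ((P t z.2).bind (P s)).map (fun w'' => (φ (s + t) z.1 w'', w'')) := by
          rw [QKer, hPsemi]
      _ = (P t z.2).bind (fun w' => (P s w').map (fun w'' => (φ (s + t) z.1 w'', w''))) :=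
          myMapBind _ (hPmeas s) (hφm (s + t) z.1)
      _ = (P t z.2).bind (fun w' => QKer φ P s (φ t z.1 w', w')) := by
          congr 1; funext w'; exact key w'
      _ = ((P t z.2).map (fun w' => (φ t z.1 w', w'))).bind (QKer φ P s) :=
          (myBindMap _ (hφm t z.1) (h1 s)).symm
      _ = (QKer φ P t z).bind (QKer φ P s) := rfl
  -- Part 5 : Feller
  have h5 : ∀ (t : ℝ≥0) (ψ : BoundedContinuousFunction (X × W) ℝ),
      Continuous fun z => ∫ y, ψ y ∂(QKer φ P t z) := by
    intro t ψ
    set G : BoundedContinuousFunction (X × W) ℝ :=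
      ψ.compContinuous ⟨fun p : X × W => (φ t p.1 p.2, p.2), hGc t⟩ with hGdef
    have hkey : ∀ z : X × W, ∫ y, ψ y ∂(QKer φ P t z) = ∫ w', G (z.1, w') ∂(P t z.2) := by
      intro z
      rw [QKer, integral_map (hφm t z.1).aemeasurable ψ.continuous.aestronglyMeasurable]
      rfl
    rw [show (fun z => ∫ y, ψ y ∂(QKer φ P t z))
        = fun z : X × W => ∫ w', G (z.1, w') ∂(P t z.2) from funext hkey]
    rw [continuous_iff_seqContinuous]
    intro zn z hzn
    have hx : Filter.Tendsto (fun n => (zn n).1) Filter.atTop (nhds z.1) :=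
      ((continuous_fst.tendsto z).comp hzn)
    have hw : Filter.Tendsto (fun n => (zn n).2) Filter.atTop (nhds z.2) :=
      ((continuous_snd.tendsto z).comp hzn)
    set μs : ℕ → ProbabilityMeasure W := fun n => ⟨P t (zn n).2, hPprob t _⟩ with hμs
    set μ : ProbabilityMeasure W := ⟨P t z.2, hPprob t _⟩ with hμ
    have hμconv : Filter.Tendsto μs Filter.atTop (nhds μ) := by
      rw [MeasureTheory.ProbabilityMeasure.tendsto_iff_forall_integral_tendsto]
      intro f
      exact ((hPFeller t f).tendsto z.2).comp hw
    exact myWeakConv G (fun n => (zn n).1) z.1 hx μs μ hμconv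
  -- Part 6 : invariance of the W-marginal
  have h6 : ∀ ν : Measure W, IsProbabilityMeasure ν → (∀ t, ν.bind (P t) = ν) →
      ∀ μ : Measure (X × W), IsProbabilityMeasure μ → μ.map Prod.snd = ν →
        ∀ t, (μ.bind (QKer φ P t)).map Prod.snd = ν := by
    intro ν hν hinv μ hμ hmarg t
    rw [myMapBind μ (h1 t) measurable_snd]
    have hsnd : (fun z : X × W => (QKer φ P t z).map Prod.snd) = fun z => P t z.2 := by
      funext z
      rw [QKer, Measure.map_map measurable_snd (hφm t z.1)]
      have : ((Prod.snd : X × W → W) ∘ fun w' => (φ t z.1 w', w')) = id := rfl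
      rw [this, Measure.map_id]
    rw [hsnd, ← myBindMap μ measurable_snd (hPmeas t), hmarg, hinv t]
  exact ⟨h1, h2, h3, h4, h5, h6⟩
end

section
/- Let H ∈ (0,1), H ≠ 1/2, t₀ ∈ ℝ, and let g : ℝ → ℝⁿ be a continuous function vanishing on (t₀, ∞) and satisfying ∫_{−∞}^{t₀} (1 + |s|)^{H−1/2} ‖g(s)‖ ds < ∞ and ∫_{−∞}^{t₀} (t₀ − s + 1)^{H−3/2} ‖g(s)‖ ds < ∞. Then for every t > t₀ the function F(u) = ∫_{−∞}^{u} (u − s)^{H−1/2} g(s) ds is differentiable at t, with derivative F′(t) = (H − 1/2) ∫_{−∞}^{t₀} (t − s)^{H−3/2} g(s) ds. -/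
open MeasureTheory Set Metric

/-- Differentiation of `F(u) = ∫_{-∞}^u (u-s)^{H-1/2} g(s) ds` for `g` vanishing on
`(t₀,∞)`: for `t > t₀`, `F'(t) = (H-1/2) ∫_{-∞}^{t₀} (t-s)^{H-3/2} g(s) ds`. -/
theorem stmt9 (n : ℕ) (H t₀ : ℝ) (hH : H ∈ Set.Ioo (0 : ℝ) 1) (hH2 : H ≠ 1 / 2)
    (g : ℝ → EuclideanSpace ℝ (Fin n)) (hg : Continuous g)
    (hgvanish : ∀ s : ℝ, t₀ < s → g s = 0)
    (hint1 : IntegrableOn (fun s => (1 + |s|) ^ (H - 1 / 2) * ‖g s‖) (Set.Iic t₀))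
    (hint2 : IntegrableOn (fun s => (t₀ - s + 1) ^ (H - 3 / 2) * ‖g s‖) (Set.Iic t₀)) :
    ∀ t : ℝ, t₀ < t →
      HasDerivAt (fun u : ℝ => ∫ s in Set.Iic u, ((u - s) ^ (H - 1 / 2)) • g s)
        ((H - 1 / 2) • ∫ s in Set.Iic t₀, ((t - s) ^ (H - 3 / 2)) • g s) t := by
  obtain ⟨hH0, hH1⟩ := hH
  intro t ht
  have hκ : H - 1 / 2 - 1 = H - 3 / 2 := by ring
  set ε : ℝ := (t - t₀) / 2 with hεdef
  have hεpos : 0 < ε := by simp only [hεdef]; linarith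
  have htε : t - ε = t₀ + ε := by simp only [hεdef]; ring
  set m : ℝ := max (1 / ε) 1 with hmdef
  have hm1 : (1 : ℝ) ≤ m := le_max_right _ _
  have hm0 : (0 : ℝ) < m := lt_of_lt_of_le one_pos hm1
  have hmε : 1 ≤ m * ε := by
    calc (1 : ℝ) = (1 / ε) * ε := by field_simp
    _ ≤ m * ε := by
        apply mul_le_mul_of_nonneg_right (le_max_left _ _) hεpos.le
  -- measurability of the kernel for u > t₀
  have hmeas : ∀ u : ℝ, t₀ < u →
      AEStronglyMeasurable (fun s => ((u - s) ^ (H - 1 / 2)) • g s)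
        (volume.restrict (Iic t₀)) := by
    intro u hu
    apply ContinuousOn.aestronglyMeasurable _ measurableSet_Iic
    apply ContinuousOn.fun_smul _ hg.continuousOn
    apply ContinuousOn.rpow_const (by fun_prop)
    intro s hs
    exact Or.inl (sub_ne_zero.mpr (lt_of_le_of_lt (mem_Iic.mp hs) hu).ne')
  -- comparison constant for the integrability of F t
  set c : ℝ := max (|t| + 1) (max ((1 + |t₀|) / (t - t₀)) 1) with hcdef
  have hc1 : (1 : ℝ) ≤ c := (le_max_right _ _).trans (le_max_right _ _)
  have hc0 : (0 : ℝ) < c := lt_of_lt_of_le one_pos hc1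
  have hcomp : ∀ s ≤ t₀,
      (t - s) ^ (H - 1 / 2) ≤ c ^ |H - 1 / 2| * (1 + |s|) ^ (H - 1 / 2) := by
    intro s hs
    have h1 : 0 < t - s := by linarith
    have h2 : 0 < 1 + |s| := by positivity
    have hub : t - s ≤ c * (1 + |s|) := by
      have ha : t - s ≤ |t| + |s| := by
        have := le_abs_self t; have := neg_abs_le s; linarith
      have hcge : |t| + 1 ≤ c := le_max_left _ _
      nlinarith [abs_nonneg s, abs_nonneg t]
    have hlb : 1 + |s| ≤ c * (t - s) := by
      have hs' : |s| ≤ |t₀| + (t₀ - s) := by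
        calc |s| = |(s - t₀) + t₀| := by ring_nf
        _ ≤ |s - t₀| + |t₀| := abs_add_le _ _
        _ = |t₀| + (t₀ - s) := by rw [abs_of_nonpos (by linarith)]; ring
      have hc2 : (1 + |t₀|) / (t - t₀) ≤ c := (le_max_left _ _).trans (le_max_right _ _)
      have hc3 : 1 + |t₀| ≤ c * (t - t₀) := by
        rw [div_le_iff₀ (by linarith)] at hc2
        linarith
      nlinarith [sub_nonneg.mpr hs]
    rcases le_or_gt 0 (H - 1 / 2) with hsign | hsign
    · have h3 : (t - s) ^ (H - 1 / 2) ≤ (c * (1 + |s|)) ^ (H - 1 / 2) :=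
        Real.rpow_le_rpow h1.le hub hsign
      rw [Real.mul_rpow hc0.le h2.le] at h3
      refine h3.trans ?_
      have : c ^ (H - 1 / 2) ≤ c ^ |H - 1 / 2| :=
        Real.rpow_le_rpow_of_exponent_le hc1 (le_abs_self _)
      exact mul_le_mul_of_nonneg_right this (Real.rpow_nonneg h2.le _)
    · have hq : (1 + |s|) / c ≤ t - s := by
        rw [div_le_iff₀ hc0]; nlinarith
      have h3 : (t - s) ^ (H - 1 / 2) ≤ ((1 + |s|) / c) ^ (H - 1 / 2) :=
        Real.rpow_le_rpow_of_nonpos (by positivity) hq hsign.le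
      rw [Real.div_rpow h2.le hc0.le] at h3
      refine h3.trans (le_of_eq ?_)
      rw [abs_of_neg hsign, div_eq_mul_inv, ← Real.rpow_neg hc0.le, mul_comm]
  -- integrability of F t
  have hFint : IntegrableOn (fun s => ((t - s) ^ (H - 1 / 2)) • g s) (Iic t₀) := by
    apply Integrable.mono' (hint1.const_mul (c ^ |H - 1 / 2|)) (hmeas t ht)
    rw [ae_restrict_iff' measurableSet_Iic]
    filter_upwards with s hs
    have h1 : 0 < t - s := by have := mem_Iic.mp hs; linarith
    rw [norm_smul, Real.norm_eq_abs, abs_of_nonneg (Real.rpow_nonneg h1.le _)]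
    calc (t - s) ^ (H - 1 / 2) * ‖g s‖
        ≤ (c ^ |H - 1 / 2| * (1 + |s|) ^ (H - 1 / 2)) * ‖g s‖ :=
          mul_le_mul_of_nonneg_right (hcomp s (mem_Iic.mp hs)) (norm_nonneg _)
      _ = c ^ |H - 1 / 2| * ((1 + |s|) ^ (H - 1 / 2) * ‖g s‖) := by ring
  -- positivity in the ball
  have hball : ∀ s ≤ t₀, ∀ u ∈ ball t ε, ε + (t₀ - s) < u - s ∧ 0 < u - s := by
    intro s hs u hu
    rw [mem_ball, Real.dist_eq, abs_lt] at hu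
    constructor <;> [linarith [hu.1]; linarith [hu.1]]
  -- bound on derivatives in the ball
  have hbound : ∀ s ≤ t₀, ∀ u ∈ ball t ε,
      ‖((H - 1 / 2) * (u - s) ^ (H - 3 / 2)) • g s‖ ≤
        (|H - 1 / 2| / m ^ (H - 3 / 2)) * ((t₀ - s + 1) ^ (H - 3 / 2) * ‖g s‖) := by
    intro s hs u hu
    obtain ⟨h1, hpos⟩ := hball s hs u hu
    have hq : (t₀ - s + 1) / m ≤ u - s := by
      rw [div_le_iff₀ hm0]
      nlinarith [mul_le_mul_of_nonneg_left h1.le hm0.le,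
        mul_nonneg (sub_nonneg.mpr hm1) (sub_nonneg.mpr hs)]
    have hrp : (u - s) ^ (H - 3 / 2) ≤ ((t₀ - s + 1) / m) ^ (H - 3 / 2) :=
      Real.rpow_le_rpow_of_nonpos (div_pos (by linarith) hm0) hq (by linarith)
    rw [Real.div_rpow (by linarith : (0:ℝ) ≤ t₀ - s + 1) hm0.le] at hrp
    rw [norm_smul, Real.norm_eq_abs, abs_mul, abs_of_nonneg (Real.rpow_nonneg hpos.le _)]
    calc |H - 1 / 2| * (u - s) ^ (H - 3 / 2) * ‖g s‖
        ≤ |H - 1 / 2| * ((t₀ - s + 1) ^ (H - 3 / 2) / m ^ (H - 3 / 2)) * ‖g s‖ := by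
          apply mul_le_mul_of_nonneg_right _ (norm_nonneg _)
          exact mul_le_mul_of_nonneg_left hrp (abs_nonneg _)
      _ = (|H - 1 / 2| / m ^ (H - 3 / 2)) * ((t₀ - s + 1) ^ (H - 3 / 2) * ‖g s‖) := by ring
  -- differentiability in the ball
  have hdiff : ∀ s ≤ t₀, ∀ u ∈ ball t ε,
      HasDerivAt (fun v : ℝ => ((v - s) ^ (H - 1 / 2)) • g s)
        (((H - 1 / 2) * (u - s) ^ (H - 3 / 2)) • g s) u := by
    intro s hs u hu
    obtain ⟨-, hpos⟩ := hball s hs u hu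
    have h2 := (((hasDerivAt_id u).sub_const s).rpow_const
      (p := H - 1 / 2) (Or.inl hpos.ne')).smul_const (g s)
    rw [← hκ]
    simpa using h2
  -- dominated differentiation under the integral
  have key := hasDerivAt_integral_of_dominated_loc_of_deriv_le
      (μ := volume.restrict (Iic t₀)) (x₀ := t)
      (F := fun u s => ((u - s) ^ (H - 1 / 2)) • g s)
      (F' := fun u s => ((H - 1 / 2) * (u - s) ^ (H - 3 / 2)) • g s)
      (bound := fun s => (|H - 1 / 2| / m ^ (H - 3 / 2)) * ((t₀ - s + 1) ^ (H - 3 / 2) * ‖g s‖))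
      (ball_mem_nhds t hεpos) ?_ hFint ?_ ?_ (hint2.const_mul _) ?_
  · -- conclude
    have hInt : (∫ s in Iic t₀, ((H - 1 / 2) * (t - s) ^ (H - 3 / 2)) • g s)
        = (H - 1 / 2) • ∫ s in Iic t₀, ((t - s) ^ (H - 3 / 2)) • g s := by
      rw [← integral_smul]
      simp_rw [smul_smul]
    have hEq : (fun u : ℝ => ∫ s in Iic u, ((u - s) ^ (H - 1 / 2)) • g s)
        =ᶠ[nhds t] (fun u : ℝ => ∫ s in Iic t₀, ((u - s) ^ (H - 1 / 2)) • g s) := by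
      filter_upwards [Ioi_mem_nhds ht] with u hu
      exact setIntegral_eq_of_subset_of_forall_diff_eq_zero measurableSet_Iic
        (Iic_subset_Iic.mpr (le_of_lt hu))
        (fun s hs => by rw [hgvanish s (not_le.mp hs.2), smul_zero])
    exact (hInt ▸ key.2).congr_of_eventuallyEq hEq
  · filter_upwards [Ioi_mem_nhds ht] with u hu
    exact hmeas u hu
  · apply ContinuousOn.aestronglyMeasurable _ measurableSet_Iic
    apply ContinuousOn.fun_smul _ hg.continuousOn
    apply continuousOn_const.mul
    apply ContinuousOn.rpow_const (by fun_prop)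
    intro s hs
    exact Or.inl (sub_ne_zero.mpr (lt_of_le_of_lt (mem_Iic.mp hs) ht).ne')
  · rw [ae_restrict_iff' measurableSet_Iic]
    filter_upwards with s hs
    exact hbound s (mem_Iic.mp hs)
  · rw [ae_restrict_iff' measurableSet_Iic]
    filter_upwards with s hs
    exact hdiff s (mem_Iic.mp hs)
end

section
/- Let H ∈ (0,1) and let r < t₂ < t be real numbers. Then (H + 1/2) ∫_r^{t₂} (t − s)^{−H−3/2} (s − r)^{H−1/2} ds = (t − t₂)^{−H−1/2} (t₂ − r)^{H−1/2} − (t − t₂)^{1/2−H} (t₂ − r)^{H−1/2} / (t − r). Equivalently, the kernel K(t,r) := (t − t₂)^{−H−1/2}(t₂ − r)^{H−1/2} − (H + 1/2) ∫_r^{t₂} (t − s)^{−H−3/2} (s − r)^{H−1/2} ds equals (t − t₂)^{1/2−H} (t₂ − r)^{H−1/2} / (t − r). -/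
open MeasureTheory Set

/-- The kernel identity: for `r < t₂ < t`,
`(H + 1/2) ∫_r^{t₂} (t-s)^{-H-3/2} (s-r)^{H-1/2} ds
  = (t-t₂)^{-H-1/2} (t₂-r)^{H-1/2} - (t-t₂)^{1/2-H} (t₂-r)^{H-1/2} / (t-r)`. -/
theorem stmt11 (H r t₂ t : ℝ) (hH : H ∈ Set.Ioo (0 : ℝ) 1) (hr : r < t₂) (ht : t₂ < t) :
    (H + 1 / 2) * ∫ s in r..t₂, (t - s) ^ (-H - 3 / 2) * (s - r) ^ (H - 1 / 2) =
      (t - t₂) ^ (-H - 1 / 2) * (t₂ - r) ^ (H - 1 / 2) -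
        (t - t₂) ^ (1 / 2 - H) * (t₂ - r) ^ (H - 1 / 2) / (t - r) := by
  obtain ⟨hH0, hH1⟩ := hH
  have hrt : r < t := hr.trans ht
  have htr : (0:ℝ) < t - r := by linarith
  have htt2 : (0:ℝ) < t - t₂ := by linarith
  have ht2r : (0:ℝ) < t₂ - r := by linarith
  -- antiderivative
  set g : ℝ → ℝ := fun s => (t - s) ^ (-H - 1/2) * (s - r) ^ (H + 1/2) / (t - r) with hg
  have hderiv : ∀ s ∈ Set.Ioo r t₂, HasDerivAt g
      ((H + 1/2) * ((t - s) ^ (-H - 3/2) * (s - r) ^ (H - 1/2))) s := by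
    intro s hs
    have hts : (0:ℝ) < t - s := by linarith [hs.2]
    have hsr : (0:ℝ) < s - r := by linarith [hs.1]
    have h1 : HasDerivAt (fun s : ℝ => (t - s) ^ (-H - 1/2))
        ((H + 1/2) * (t - s) ^ (-H - 3/2)) s := by
      have h := ((hasDerivAt_id s).const_sub t).rpow_const (p := -H - 1/2) (Or.inl hts.ne')
      rw [show (-H - 1/2 - 1 : ℝ) = -H - 3/2 from by ring] at h
      simp only [id_eq] at h
      convert h using 1
      ring
    have h2 : HasDerivAt (fun s : ℝ => (s - r) ^ (H + 1/2))
        ((H + 1/2) * (s - r) ^ (H - 1/2)) s := by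
      have h := ((hasDerivAt_id s).sub_const r).rpow_const (p := H + 1/2) (Or.inl hsr.ne')
      rw [show (H + 1/2 - 1 : ℝ) = H - 1/2 from by ring] at h
      simp only [id_eq] at h
      convert h using 1
      ring
    have h3 := (h1.mul h2).div_const (t - r)
    convert h3 using 1
    · rfl
    · rfl
    · rfl
    have e3 : (s - r) ^ (H + 1/2) = (s - r) ^ (H - 1/2) * (s - r) := by
      rw [← Real.rpow_add_one hsr.ne']; ring_nf
    have e4 : (t - s) ^ (-H - 1/2) = (t - s) ^ (-H - 3/2) * (t - s) := by
      rw [← Real.rpow_add_one hts.ne']; ring_nf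
    rw [e3, e4]
    field_simp
    ring
  -- integrability
  have hint : IntervalIntegrable
      (fun s => (H + 1/2) * ((t - s) ^ (-H - 3/2) * (s - r) ^ (H - 1/2))) volume r t₂ := by
    have hbase : IntervalIntegrable (fun x : ℝ => x ^ (H - 1/2)) volume 0 (t₂ - r) :=
      intervalIntegral.intervalIntegrable_rpow' (by linarith)
    have hshift : IntervalIntegrable (fun s : ℝ => (s - r) ^ (H - 1/2)) volume r t₂ := by
      have := hbase.comp_sub_right r
      simpa using this
    have hcont : ContinuousOn (fun s : ℝ => (H + 1/2) * (t - s) ^ (-H - 3/2))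
        (Set.uIcc r t₂) := by
      apply ContinuousOn.mul continuousOn_const
      apply ContinuousOn.rpow_const (by fun_prop)
      intro s hs
      rw [Set.uIcc_of_le hr.le] at hs
      exact Or.inl (by linarith [hs.2])
    have := hshift.continuousOn_mul hcont
    simpa [mul_assoc, mul_comm, mul_left_comm] using this
  -- limits
  have ha : Filter.Tendsto g (nhdsWithin r (Set.Ioi r)) (nhds 0) := by
    have c1 : ContinuousAt (fun s : ℝ => (t - s) ^ (-H - 1/2)) r :=
      ContinuousAt.rpow_const (by fun_prop) (Or.inl htr.ne')
    have c2 : ContinuousAt (fun s : ℝ => (s - r) ^ (H + 1/2)) r :=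
      ContinuousAt.rpow_const (by fun_prop) (Or.inr (by linarith))
    have hc : ContinuousAt g r := (c1.mul c2).div_const _
    have hg0 : g r = 0 := by
      have hz : ((r:ℝ) - r) ^ (H + 1/2) = 0 := by
        rw [sub_self, Real.zero_rpow (by positivity : (H + 1/2 : ℝ) ≠ 0)]
      simp only [hg, hz, mul_zero, zero_div]
    rw [← hg0]
    exact hc.continuousWithinAt.tendsto
  have hb : Filter.Tendsto g (nhdsWithin t₂ (Set.Iio t₂)) (nhds (g t₂)) := by
    have c1 : ContinuousAt (fun s : ℝ => (t - s) ^ (-H - 1/2)) t₂ :=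
      ContinuousAt.rpow_const (by fun_prop) (Or.inl htt2.ne')
    have c2 : ContinuousAt (fun s : ℝ => (s - r) ^ (H + 1/2)) t₂ :=
      ContinuousAt.rpow_const (by fun_prop) (Or.inl ht2r.ne')
    exact ((c1.mul c2).div_const _).continuousWithinAt.tendsto
  have key := intervalIntegral.integral_eq_sub_of_hasDerivAt_of_tendsto hr hderiv hint ha hb
  rw [← intervalIntegral.integral_const_mul, key, sub_zero]
  show (t - t₂) ^ (-H - 1/2) * (t₂ - r) ^ (H + 1/2) / (t - r) = _
  have e3 : (t₂ - r) ^ (H + 1/2) = (t₂ - r) ^ (H - 1/2) * (t₂ - r) := by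
    rw [← Real.rpow_add_one ht2r.ne']; ring_nf
  have e4 : (t - t₂) ^ (1/2 - H) = (t - t₂) ^ (-H - 1/2) * (t - t₂) := by
    rw [← Real.rpow_add_one htt2.ne']; ring_nf
  rw [e3, e4]
  field_simp
  ring
end
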